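/- arXiv:0904.0262 — 7 statements merged into one kernel-verified Lean document; each statement's English description precedes it below -/
import Mathlib

section
/- For all integers ℓ ≥ 2 and k ≥ 3 there exists an integer n such that every finite set of at least n points in the plane contains ℓ collinear points or k points in strictly convex position. -/
noncomputable section

/-- A point in the plane. -/
abbrev Pt : Type := EuclideanSpace ℝ (Fin 2)

noncomputable instance : DecidableEq Pt := Classical.decEq _

/-- A finite point set is in general position if no three of its points are collinear. -/
def GenPos (P : Finset Pt) : Prop :=
  ∀ S ⊆ P, S.card = 3 → ¬ Collinear ℝ (S : Set Pt)

/-- A finite point set is in convex position if every point lies on the boundary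
of the convex hull of the set. -/
def ConvexPos (P : Finset Pt) : Prop :=
  ∀ p ∈ P, p ∈ frontier (convexHull ℝ (P : Set Pt))

/-- `v` is a corner of `P` if removing it changes the convex hull. -/
def IsCornerOf (P : Finset Pt) (v : Pt) : Prop :=
  convexHull ℝ ((P : Set Pt) \ {v}) ≠ convexHull ℝ (P : Set Pt)

/-- A finite point set is in strictly convex position if each of its points is a corner. -/
def StrictConvexPos (P : Finset Pt) : Prop :=
  ∀ v ∈ P, IsCornerOf P v

/-- `P` contains `k` points in convex position. -/
def HasConvex (P : Finset Pt) (k : ℕ) : Prop :=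
  ∃ S ⊆ P, S.card = k ∧ ConvexPos S

/-- `P` contains `k` points in strictly convex position. -/
def HasStrictConvex (P : Finset Pt) (k : ℕ) : Prop :=
  ∃ S ⊆ P, S.card = k ∧ StrictConvexPos S

/-- `P` contains `l` collinear points. -/
def HasCollinear (P : Finset Pt) (l : ℕ) : Prop :=
  ∃ S ⊆ P, S.card = l ∧ Collinear ℝ (S : Set Pt)

/-- The Erdős–Szekeres number: the least `n` such that every finite set of at least `n`
points in general position contains `k` points in convex position. -/
def ES (k : ℕ) : ℕ :=
  sInf {n : ℕ | ∀ P : Finset Pt, GenPos P → n ≤ P.card → HasConvex P k}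

/-- `X` is a `k`-hole of `P`: `k` points of `P` in strictly convex position whose
convex hull contains no other point of `P`. -/
def IsHole (P X : Finset Pt) (k : ℕ) : Prop :=
  X ⊆ P ∧ X.card = k ∧ StrictConvexPos X ∧
    convexHull ℝ (X : Set Pt) ∩ (P : Set Pt) = (X : Set Pt)

/-- `v` and `w` are visible with respect to `P`. -/
def Visible (P : Finset Pt) (v w : Pt) : Prop :=
  v ≠ w ∧ (P : Set Pt) ∩ segment ℝ v w = {v, w}

end


namespace ESaux

/-! ### determinant/orientation -/

def Dt (a b c : Pt) : ℝ := (b 0 - a 0) * (c 1 - a 1) - (b 1 - a 1) * (c 0 - a 0)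

lemma Dt_cyc1 (a b c : Pt) : Dt a b c = Dt b c a := by unfold Dt; ring
lemma Dt_cyc2 (a b c : Pt) : Dt a b c = Dt c a b := by unfold Dt; ring
lemma Dt_swap23 (a b c : Pt) : Dt a c b = -Dt a b c := by unfold Dt; ring
lemma Dt_rev (a b c : Pt) : Dt c b a = -Dt a b c := by unfold Dt; ring
lemma Dt_aba (a b : Pt) : Dt a b a = 0 := by unfold Dt; ring
lemma Dt_abb (a b : Pt) : Dt a b b = 0 := by unfold Dt; ring

lemma pt_ext {x y : Pt} (h0 : x 0 = y 0) (h1 : x 1 = y 1) : x = y := by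
  ext i
  fin_cases i
  · exact h0
  · exact h1

lemma smul_sub_add_apply (t : ℝ) (b a : Pt) (i : Fin 2) :
    (t • (b - a) +ᵥ a) i = t * (b i - a i) + a i := by
  rw [vadd_eq_add]
  simp [PiLp.add_apply, PiLp.smul_apply, PiLp.sub_apply]

lemma Dt_affine (a b x y : Pt) (t1 t2 : ℝ) (h : t1 + t2 = 1) :
    Dt a b (t1 • x + t2 • y) = t1 * Dt a b x + t2 * Dt a b y := by
  have h2 : t2 = 1 - t1 := by linarith
  subst h2
  unfold Dt
  simp only [PiLp.add_apply, PiLp.smul_apply, smul_eq_mul]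
  ring

lemma convex_halfplane (a b : Pt) : Convex ℝ {x : Pt | 0 ≤ Dt a b x} := by
  intro x hx y hy t1 t2 ht1 ht2 hsum
  simp only [Set.mem_setOf_eq] at *
  rw [Dt_affine a b x y t1 t2 hsum]
  positivity

lemma corner_of_sep (S : Finset Pt) (v : Pt) (hv : v ∈ S) (a b : Pt)
    (hneg : Dt a b v < 0) (hpos : ∀ w ∈ S, w ≠ v → 0 ≤ Dt a b w) :
    IsCornerOf S v := by
  intro h
  have hv' : v ∈ convexHull ℝ ((S : Set Pt) \ {v}) := by
    rw [h]; exact subset_convexHull ℝ _ hv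
  have hsub : convexHull ℝ ((S : Set Pt) \ {v}) ⊆ {x : Pt | 0 ≤ Dt a b x} := by
    apply convexHull_min _ (convex_halfplane a b)
    rintro w ⟨hwS, hwv⟩
    exact hpos w hwS hwv
  have := hsub hv'
  simp only [Set.mem_setOf_eq] at this
  linarith

/-! ### collinearity from vanishing determinant -/

lemma collinear_of_Dt_eq_zero {a b c : Pt} (h : Dt a b c = 0) :
    Collinear ℝ ({a, b, c} : Set Pt) := by
  by_cases hab : a = b
  · subst hab
    have : ({a, a, c} : Set Pt) = {a, c} := by simp
    rw [this]; exact collinear_pair ℝ a c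
  · rw [collinear_iff_of_mem (Set.mem_insert a _)]
    refine ⟨b - a, ?_⟩
    have key : ∀ q : Pt, Dt a b q = 0 → ∃ r : ℝ, q = r • (b - a) +ᵥ a := by
      intro q hq
      unfold Dt at hq
      by_cases h0 : b 0 - a 0 ≠ 0
      · refine ⟨(q 0 - a 0) / (b 0 - a 0), (pt_ext ?_ ?_).symm⟩
        · rw [smul_sub_add_apply]; field_simp; ring
        · rw [smul_sub_add_apply]
          have k1 : (q 0 - a 0) / (b 0 - a 0) * (b 1 - a 1) = q 1 - a 1 := by
            field_simp; linarith [hq]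
          linarith [k1]
      · push_neg at h0
        by_cases h1 : b 1 - a 1 = 0
        · exact absurd (pt_ext (by linarith) (by linarith)) hab
        · refine ⟨(q 1 - a 1) / (b 1 - a 1), (pt_ext ?_ ?_).symm⟩
          · rw [smul_sub_add_apply]
            rw [h0] at hq
            have hz : q 0 - a 0 = 0 := by
              rcases mul_eq_zero.mp (show (b 1 - a 1) * (q 0 - a 0) = 0 by linarith) with h' | h'
              · exact absurd h' h1
              · exact h'
            rw [show b 0 - a 0 = 0 from h0]
            simp
            linarith
          · rw [smul_sub_add_apply]; field_simp; ring
    rintro q (rfl | rfl | rfl)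
    · exact ⟨0, by simp⟩
    · exact ⟨1, by simp⟩
    · exact key _ h

lemma collinear_of_all_triples (S : Finset Pt)
    (hS : ∀ a ∈ S, ∀ b ∈ S, ∀ c ∈ S, Collinear ℝ ({a, b, c} : Set Pt)) :
    Collinear ℝ (S : Set Pt) := by
  by_cases hsub : ∀ a ∈ S, ∀ b ∈ S, a = b
  · rcases Finset.eq_empty_or_nonempty S with rfl | ⟨a, ha⟩
    · simpa using collinear_empty ℝ (P := Pt)
    · have hSet : (S : Set Pt) = {a} := by
        ext x
        simp only [Set.mem_singleton_iff, Finset.mem_coe]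
        exact ⟨fun hx => hsub x hx a ha, fun hx => hx ▸ ha⟩
      rw [hSet]
      exact collinear_singleton ℝ a
  · push_neg at hsub
    obtain ⟨a, ha, b, hb, hab⟩ := hsub
    rw [collinear_iff_of_mem (show a ∈ (S : Set Pt) from ha)]
    refine ⟨b - a, ?_⟩
    intro p hp
    have h3 := hS a ha b hb p hp
    rw [collinear_iff_of_mem (Set.mem_insert a _)] at h3
    obtain ⟨v, hv⟩ := h3
    obtain ⟨rb, hrb⟩ := hv b (by simp)
    obtain ⟨rp, hrp⟩ := hv p (by simp)
    have hrb0 : rb ≠ 0 := by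
      rintro rfl
      simp at hrb
      exact hab hrb.symm
    refine ⟨rp / rb, ?_⟩
    rw [hrp, hrb]
    have h4 : ((rb • v +ᵥ a : Pt) - a) = rb • v := by
      simp [vadd_eq_add]
    rw [h4, smul_smul, div_mul_cancel₀ _ hrb0]

lemma collinear_triples_unsorted (p : ℕ → Pt) (T : Finset ℕ)
    (hz : ∀ i ∈ T, ∀ j ∈ T, ∀ k ∈ T, i < j → j < k → Dt (p i) (p j) (p k) = 0) :
    ∀ i ∈ T, ∀ j ∈ T, ∀ k ∈ T, Collinear ℝ ({p i, p j, p k} : Set Pt) := by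
  have key : ∀ a ∈ T, ∀ b ∈ T, ∀ c ∈ T, a < b → b < c →
      Collinear ℝ ({p a, p b, p c} : Set Pt) :=
    fun a ha b hb c hc h1 h2 => collinear_of_Dt_eq_zero (hz a ha b hb c hc h1 h2)
  intro i hi j hj k hk
  rcases lt_trichotomy i j with hij | rfl | hij
  · rcases lt_trichotomy j k with hjk | rfl | hjk
    · exact key i hi j hj k hk hij hjk
    · have hs : ({p i, p j, p j} : Set Pt) = {p i, p j} := by simp
      rw [hs]; exact collinear_pair ℝ _ _
    · rcases lt_trichotomy i k with hik | rfl | hik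
      · have h := key i hi k hk j hj hik hjk
        have hs : ({p i, p j, p k} : Set Pt) = {p i, p k, p j} := by ext t; simp; tauto
        rw [hs]; exact h
      · have hs : ({p i, p j, p i} : Set Pt) = {p i, p j} := by ext t; simp; tauto
        rw [hs]; exact collinear_pair ℝ _ _
      · have h := key k hk i hi j hj hik hij
        have hs : ({p i, p j, p k} : Set Pt) = {p k, p i, p j} := by ext t; simp; tauto
        rw [hs]; exact h
  · have hs : ({p i, p i, p k} : Set Pt) = {p i, p k} := by simp
    rw [hs]; exact collinear_pair ℝ _ _
  · rcases lt_trichotomy i k with hik | rfl | hik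
    · have h := key j hj i hi k hk hij hik
      have hs : ({p i, p j, p k} : Set Pt) = {p j, p i, p k} := by ext t; simp; tauto
      rw [hs]; exact h
    · have hs : ({p i, p j, p i} : Set Pt) = {p i, p j} := by ext t; simp; tauto
      rw [hs]; exact collinear_pair ℝ _ _
    · rcases lt_trichotomy j k with hjk | rfl | hjk
      · have h := key j hj k hk i hi hjk hik
        have hs : ({p i, p j, p k} : Set Pt) = {p j, p k, p i} := by ext t; simp; tauto
        rw [hs]; exact h
      · have hs : ({p i, p j, p j} : Set Pt) = {p i, p j} := by simp
        rw [hs]; exact collinear_pair ℝ _ _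
      · have h := key k hk j hj i hi hjk hij
        have hs : ({p i, p j, p k} : Set Pt) = {p k, p j, p i} := by ext t; simp; tauto
        rw [hs]; exact h

/-! ### convex position from consistent orientation -/

lemma corner_aux {m : ℕ} (q : Fin m → Pt) (j a b : Fin m)
    (hneg : Dt (q a) (q b) (q j) < 0)
    (hpos' : ∀ i : Fin m, i ≠ j → 0 ≤ Dt (q a) (q b) (q i)) :
    IsCornerOf (Finset.image q Finset.univ) (q j) := by
  apply corner_of_sep _ _ (Finset.mem_image_of_mem q (Finset.mem_univ j)) (q a) (q b) hneg
  intro w hw hwne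
  obtain ⟨i, -, rfl⟩ := Finset.mem_image.mp hw
  exact hpos' i (fun h => hwne (by rw [h]))

lemma strictConvexPos_of_pos {m : ℕ} (hm : 3 ≤ m) (q : Fin m → Pt)
    (hpos : ∀ i j k : Fin m, i < j → j < k → 0 < Dt (q i) (q j) (q k)) :
    ∀ v ∈ Finset.image q Finset.univ, IsCornerOf (Finset.image q Finset.univ) v := by
  intro v hv
  obtain ⟨j, -, rfl⟩ := Finset.mem_image.mp hv
  rcases Nat.lt_trichotomy 0 j.val with hj0 | hj0 | hj0
  · rcases Nat.lt_trichotomy j.val (m - 1) with hj1 | hj1 | hj1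
    · have hjm : j.val + 1 < m := by omega
      set a : Fin m := ⟨j.val - 1, by omega⟩ with ha
      set b : Fin m := ⟨j.val + 1, hjm⟩ with hb
      apply corner_aux q j a b
      · have h := hpos a j b (by simp [Fin.lt_def, ha]; omega) (by simp [Fin.lt_def, hb])
        rw [Dt_swap23]
        linarith
      · intro i hne
        have hvne : i.val ≠ j.val := fun h => hne (Fin.ext h)
        by_cases hia : i = a
        · rw [hia, Dt_aba]
        · by_cases hib : i = b
          · rw [hib, Dt_abb]
          · have h1 : i.val ≠ j.val - 1 := fun h => hia (Fin.ext h)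
            have h2 : i.val ≠ j.val + 1 := fun h => hib (Fin.ext h)
            rcases (show i.val < j.val - 1 ∨ j.val + 1 < i.val by omega) with hc | hc
            · have h := hpos i a b (by simp [Fin.lt_def, ha]; omega)
                (by simp [Fin.lt_def, ha, hb])
              rw [Dt_cyc2]
              linarith
            · have h := hpos a b i (by simp [Fin.lt_def, ha, hb])
                (by simp [Fin.lt_def, hb]; omega)
              linarith
    · have h0m : 0 < m := by omega
      set a : Fin m := ⟨m - 2, by omega⟩ with ha
      set b : Fin m := ⟨0, h0m⟩ with hb
      apply corner_aux q j a b
      · have h := hpos b a j (by simp [Fin.lt_def, ha, hb]; omega)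
          (by simp [Fin.lt_def, ha]; omega)
        rw [Dt_cyc1 (q a) (q b) (q j), Dt_swap23]
        linarith
      · intro i hne
        have hvne : i.val ≠ j.val := fun h => hne (Fin.ext h)
        by_cases hia : i = a
        · rw [hia, Dt_aba]
        · by_cases hib : i = b
          · rw [hib, Dt_abb]
          · have h1 : i.val ≠ m - 2 := fun h => hia (Fin.ext h)
            have h2 : i.val ≠ 0 := fun h => hib (Fin.ext h)
            have h := hpos b i a (by simp [Fin.lt_def, hb]; omega)
              (by simp [Fin.lt_def, ha]; omega)
            rw [Dt_cyc1 (q a)]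
            linarith
    · exact absurd j.isLt (by omega)
  · set a : Fin m := ⟨m - 1, by omega⟩ with ha
    set b : Fin m := ⟨1, by omega⟩ with hb
    apply corner_aux q j a b
    · have h := hpos j b a (by simp [Fin.lt_def, hb]; omega)
        (by simp [Fin.lt_def, ha, hb]; omega)
      rw [Dt_cyc1 (q a) (q b) (q j), Dt_cyc1 (q b) (q j) (q a), Dt_swap23]
      linarith
    · intro i hne
      have hvne : i.val ≠ j.val := fun h => hne (Fin.ext h)
      by_cases hia : i = a
      · rw [hia, Dt_aba]
      · by_cases hib : i = b
        · rw [hib, Dt_abb]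
        · have h1 : i.val ≠ m - 1 := fun h => hia (Fin.ext h)
          have h2 : i.val ≠ 1 := fun h => hib (Fin.ext h)
          have h := hpos b i a (by simp [Fin.lt_def, hb]; omega)
            (by simp [Fin.lt_def, ha]; omega)
          rw [Dt_cyc1 (q a)]
          linarith
  · exact absurd hj0 (by omega)

/-! ### Ramsey theory -/

lemma pigeon_fiber {α : Type*} (A : Finset α) (r n : ℕ) (f : α → Fin r)
    (hA : r * n ≤ A.card) (hr : 0 < r) :
    ∃ col : Fin r, n ≤ (A.filter (fun a => f a = col)).card := by
  rcases n with _ | m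
  · exact ⟨⟨0, hr⟩, Nat.zero_le _⟩
  · by_contra hcon
    push_neg at hcon
    have hsum : A.card = ∑ col : Fin r, (A.filter fun a => f a = col).card :=
      Finset.card_eq_sum_card_fiberwise (fun a _ => Finset.mem_univ (f a))
    have hb : ∑ col : Fin r, (A.filter fun a => f a = col).card ≤ ∑ _col : Fin r, m := by
      apply Finset.sum_le_sum
      intro col _
      have := hcon col
      omega
    simp only [Finset.sum_const, Finset.card_univ, Fintype.card_fin, smul_eq_mul] at hb
    rw [Nat.mul_succ] at hA
    omega

lemma pair_seq (r : ℕ) (hr : 0 < r) (t : ℕ) :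
    ∃ n : ℕ, ∀ (c : ℕ → ℕ → Fin r) (A : Finset ℕ), n ≤ A.card →
      ∃ (v : Fin t → ℕ) (d : Fin t → Fin r), StrictMono v ∧ (∀ i, v i ∈ A) ∧
        ∀ i j : Fin t, i < j → c (v i) (v j) = d i := by
  induction t with
  | zero =>
      refine ⟨0, fun c A _ => ⟨Fin.elim0, Fin.elim0, ?_, fun i => i.elim0, fun i => i.elim0⟩⟩
      intro i
      exact i.elim0
  | succ t ih =>
      obtain ⟨n, hn⟩ := ih
      refine ⟨r * n + 1, ?_⟩
      intro c A hA
      have hA0 : A.Nonempty := Finset.card_pos.mp (by omega)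
      set v0 := A.min' hA0 with hv0
      set B := A.erase v0 with hBdef
      have hB : r * n ≤ B.card := by
        have hBc : B.card = A.card - 1 := by
          rw [hBdef, Finset.card_erase_of_mem (A.min'_mem hA0)]
        omega
      obtain ⟨col, hcol⟩ := pigeon_fiber B r n (fun b => c v0 b) hB hr
      set C := B.filter (fun b => c v0 b = col) with hCdef
      obtain ⟨v, d, hmono, hmem, hcc⟩ := hn c C hcol
      have hCsub : C ⊆ B := Finset.filter_subset _ _
      have hlt : ∀ i, v0 < v i := by
        intro i
        have hiB : v i ∈ B := hCsub (hmem i)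
        have h1 : v i ∈ A := Finset.mem_of_mem_erase hiB
        have h2 : v i ≠ v0 := Finset.ne_of_mem_erase hiB
        exact lt_of_le_of_ne (A.min'_le _ h1) (Ne.symm h2)
      refine ⟨Fin.cons v0 v, Fin.cons col d, ?_, ?_, ?_⟩
      · intro i j hij
        induction i using Fin.cases with
        | zero =>
            induction j using Fin.cases with
            | zero => exact absurd hij (lt_irrefl _)
            | succ j' => simpa using hlt j'
        | succ i' =>
            induction j using Fin.cases with
            | zero => exact absurd hij (by simp [Fin.lt_def])
            | succ j' =>
                simpa using hmono (by simpa [Fin.succ_lt_succ_iff] using hij)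
      · intro i
        induction i using Fin.cases with
        | zero => simpa using A.min'_mem hA0
        | succ i' =>
            simpa using Finset.mem_of_mem_erase (hCsub (hmem i'))
      · intro i j hij
        induction i using Fin.cases with
        | zero =>
            induction j using Fin.cases with
            | zero => exact absurd hij (lt_irrefl _)
            | succ j' =>
                have := hmem j'
                rw [hCdef, Finset.mem_filter] at this
                simpa using this.2
        | succ i' =>
            induction j using Fin.cases with
            | zero => exact absurd hij (by simp [Fin.lt_def])
            | succ j' =>
                simpa using hcc i' j' (by simpa [Fin.succ_lt_succ_iff] using hij)

lemma pair_ramsey (r : ℕ) (hr : 0 < r) (s : ℕ) :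
    ∃ n : ℕ, ∀ (c : ℕ → ℕ → Fin r) (A : Finset ℕ), n ≤ A.card →
      ∃ T : Finset ℕ, T ⊆ A ∧ s ≤ T.card ∧
        ∃ col : Fin r, ∀ a ∈ T, ∀ b ∈ T, a < b → c a b = col := by
  obtain ⟨n, hn⟩ := pair_seq r hr (r * s)
  refine ⟨n, ?_⟩
  intro c A hA
  obtain ⟨v, d, hmono, hmem, hc⟩ := hn c A hA
  obtain ⟨col, hcol⟩ := pigeon_fiber (Finset.univ : Finset (Fin (r * s))) r s d
    (by simp) hr
  refine ⟨(Finset.univ.filter fun i => d i = col).image v, ?_, ?_, col, ?_⟩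
  · intro x hx
    simp only [Finset.mem_image] at hx
    obtain ⟨i, _, rfl⟩ := hx
    exact hmem i
  · rw [Finset.card_image_of_injective _ hmono.injective]
    exact hcol
  · intro a ha b hb hab
    simp only [Finset.mem_image, Finset.mem_filter] at ha hb
    obtain ⟨i, ⟨_, hdi⟩, rfl⟩ := ha
    obtain ⟨j, ⟨_, _⟩, rfl⟩ := hb
    have hij : i < j := hmono.lt_iff_lt.mp hab
    rw [hc i j hij, hdi]

lemma triple_seq (r : ℕ) (hr : 0 < r) (t : ℕ) :
    ∃ n : ℕ, ∀ (c : ℕ → ℕ → ℕ → Fin r) (A : Finset ℕ), n ≤ A.card →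
      ∃ (v : Fin t → ℕ) (d : Fin t → Fin r), StrictMono v ∧ (∀ i, v i ∈ A) ∧
        ∀ i j k : Fin t, i < j → j < k → c (v i) (v j) (v k) = d i := by
  induction t with
  | zero =>
      refine ⟨0, fun c A _ => ⟨Fin.elim0, Fin.elim0, ?_, fun i => i.elim0, fun i => i.elim0⟩⟩
      intro i
      exact i.elim0
  | succ t ih =>
      obtain ⟨n, hn⟩ := ih
      obtain ⟨m, hm⟩ := pair_ramsey r hr n
      refine ⟨m + 1, ?_⟩
      intro c A hA
      have hA0 : A.Nonempty := Finset.card_pos.mp (by omega)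
      set v0 := A.min' hA0 with hv0
      set B := A.erase v0 with hBdef
      have hB : m ≤ B.card := by
        have hBc : B.card = A.card - 1 := by
          rw [hBdef, Finset.card_erase_of_mem (A.min'_mem hA0)]
        omega
      obtain ⟨C, hCsub, hCcard, col, hcol⟩ := hm (fun a b => c v0 a b) B hB
      obtain ⟨v, d, hmono, hmem, hcc⟩ := hn c C hCcard
      have hlt : ∀ i, v0 < v i := by
        intro i
        have hiB : v i ∈ B := hCsub (hmem i)
        have h1 : v i ∈ A := Finset.mem_of_mem_erase hiB
        have h2 : v i ≠ v0 := Finset.ne_of_mem_erase hiB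
        exact lt_of_le_of_ne (A.min'_le _ h1) (Ne.symm h2)
      refine ⟨Fin.cons v0 v, Fin.cons col d, ?_, ?_, ?_⟩
      · intro i j hij
        induction i using Fin.cases with
        | zero =>
            induction j using Fin.cases with
            | zero => exact absurd hij (lt_irrefl _)
            | succ j' => simpa using hlt j'
        | succ i' =>
            induction j using Fin.cases with
            | zero => exact absurd hij (by simp [Fin.lt_def])
            | succ j' =>
                simpa using hmono (by simpa [Fin.succ_lt_succ_iff] using hij)
      · intro i
        induction i using Fin.cases with
        | zero => simpa using A.min'_mem hA0
        | succ i' =>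
            simpa using Finset.mem_of_mem_erase (hCsub (hmem i'))
      · intro i j k hij hjk
        induction i using Fin.cases with
        | zero =>
            induction j using Fin.cases with
            | zero => exact absurd hij (lt_irrefl _)
            | succ j' =>
                induction k using Fin.cases with
                | zero => exact absurd hjk (by simp [Fin.lt_def])
                | succ k' =>
                    have hjk' : j' < k' := by simpa [Fin.succ_lt_succ_iff] using hjk
                    have := hcol (v j') (hmem j') (v k') (hmem k') (hmono hjk')
                    simpa using this
        | succ i' =>
            induction j using Fin.cases with
            | zero => exact absurd hij (by simp [Fin.lt_def])
            | succ j' =>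
                induction k using Fin.cases with
                | zero => exact absurd hjk (by simp [Fin.lt_def])
                | succ k' =>
                    simpa using hcc i' j' k' (by simpa [Fin.succ_lt_succ_iff] using hij)
                      (by simpa [Fin.succ_lt_succ_iff] using hjk)

lemma triple_ramsey (r : ℕ) (hr : 0 < r) (s : ℕ) :
    ∃ n : ℕ, ∀ (c : ℕ → ℕ → ℕ → Fin r) (A : Finset ℕ), n ≤ A.card →
      ∃ T : Finset ℕ, T ⊆ A ∧ s ≤ T.card ∧
        ∃ col : Fin r, ∀ a ∈ T, ∀ b ∈ T, ∀ e ∈ T, a < b → b < e → c a b e = col := by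
  obtain ⟨n, hn⟩ := triple_seq r hr (r * s)
  refine ⟨n, ?_⟩
  intro c A hA
  obtain ⟨v, d, hmono, hmem, hc⟩ := hn c A hA
  obtain ⟨col, hcol⟩ := pigeon_fiber (Finset.univ : Finset (Fin (r * s))) r s d
    (by simp) hr
  refine ⟨(Finset.univ.filter fun i => d i = col).image v, ?_, ?_, col, ?_⟩
  · intro x hx
    simp only [Finset.mem_image] at hx
    obtain ⟨i, _, rfl⟩ := hx
    exact hmem i
  · rw [Finset.card_image_of_injective _ hmono.injective]
    exact hcol
  · intro a ha b hb e he hab hbe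
    simp only [Finset.mem_image, Finset.mem_filter] at ha hb he
    obtain ⟨i, ⟨_, hdi⟩, rfl⟩ := ha
    obtain ⟨j, ⟨_, _⟩, rfl⟩ := hb
    obtain ⟨k', ⟨_, _⟩, rfl⟩ := he
    rw [hc i j k' (hmono.lt_iff_lt.mp hab) (hmono.lt_iff_lt.mp hbe), hdi]

/-! ### orientation coloring -/

noncomputable def colOf (x : ℝ) : Fin 3 :=
  if 0 < x then 1 else if x < 0 then 2 else 0

lemma colOf_cases (x : ℝ) (col : Fin 3) (h : colOf x = col) :
    (col.val = 0 ∧ x = 0) ∨ (col.val = 1 ∧ 0 < x) ∨ (col.val = 2 ∧ x < 0) := by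
  unfold colOf at h
  split_ifs at h with h1 h2
  · right; left; exact ⟨by rw [← h]; decide, h1⟩
  · right; right; exact ⟨by rw [← h]; decide, h2⟩
  · left; exact ⟨by rw [← h]; decide, by linarith⟩

end ESaux

theorem stmt1 (l k : ℕ) (hl : 2 ≤ l) (hk : 3 ≤ k) :
    ∃ n : ℕ, ∀ P : Finset Pt, n ≤ P.card →
      HasCollinear P l ∨ HasStrictConvex P k := by
  classical
  obtain ⟨n, hn⟩ := ESaux.triple_ramsey 3 (by norm_num) (max l k)
  refine ⟨n, ?_⟩
  intro P hP
  set N := P.card with hN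
  set e := P.equivFin with he
  set p : ℕ → Pt := fun i => if h : i < N then ((e.symm ⟨i, h⟩ : P) : Pt) else 0 with hp
  have hpmem : ∀ i < N, p i ∈ P := by
    intro i hi
    simp only [hp, dif_pos hi]
    exact (e.symm ⟨i, hi⟩).2
  have hpinj : ∀ i < N, ∀ j < N, p i = p j → i = j := by
    intro i hi j hj hpij
    simp only [hp, dif_pos hi, dif_pos hj] at hpij
    have h2 : (⟨i, hi⟩ : Fin N) = ⟨j, hj⟩ :=
      e.symm.injective (Subtype.coe_injective hpij)
    simpa using congrArg Fin.val h2
  set c : ℕ → ℕ → ℕ → Fin 3 := fun i j k' => ESaux.colOf (ESaux.Dt (p i) (p j) (p k')) with hc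
  obtain ⟨T, hTsub, hTcard, col, hcol⟩ := hn c (Finset.range N)
    (by simpa using hP)
  have hTN : ∀ i ∈ T, i < N := fun i hi => Finset.mem_range.mp (hTsub hi)
  have hpinjT : Set.InjOn p T := fun i hi j hj h =>
    hpinj i (hTN i hi) j (hTN j hj) h
  have h3 := col.isLt
  rcases (show col.val = 0 ∨ col.val = 1 ∨ col.val = 2 by omega) with hcv | hcv | hcv
  · -- collinear case
    left
    set S0 := T.image p with hS0
    have hS0card : S0.card = T.card := Finset.card_image_of_injOn hpinjT
    have hS0sub : S0 ⊆ P := by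
      intro x hx
      obtain ⟨i, hi, rfl⟩ := Finset.mem_image.mp hx
      exact hpmem i (hTN i hi)
    have hz : ∀ i ∈ T, ∀ j ∈ T, ∀ k' ∈ T, i < j → j < k' →
        ESaux.Dt (p i) (p j) (p k') = 0 := by
      intro i hi j hj k' hk' h1 h2
      rcases ESaux.colOf_cases _ _ (hcol i hi j hj k' hk' h1 h2) with
        ⟨_, h⟩ | ⟨h', _⟩ | ⟨h', _⟩
      · exact h
      · omega
      · omega
    have hall := ESaux.collinear_triples_unsorted p T hz
    have hcolin : Collinear ℝ (S0 : Set Pt) := by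
      apply ESaux.collinear_of_all_triples
      intro a ha b hb cc hcc
      obtain ⟨i, hi, rfl⟩ := Finset.mem_image.mp ha
      obtain ⟨j, hj, rfl⟩ := Finset.mem_image.mp hb
      obtain ⟨k', hk', rfl⟩ := Finset.mem_image.mp hcc
      exact hall i hi j hj k' hk'
    have hlS0 : l ≤ S0.card := by
      rw [hS0card]
      exact le_trans (le_max_left l k) hTcard
    obtain ⟨S1, hS1sub, hS1card⟩ := Finset.exists_subset_card_eq (s := S0) (n := l) hlS0
    exact ⟨S1, hS1sub.trans hS0sub, hS1card,
      Collinear.subset (Finset.coe_subset.mpr hS1sub) hcolin⟩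
  · -- positively oriented case
    right
    have hkT : k ≤ T.card := le_trans (le_max_right l k) hTcard
    obtain ⟨T', hT'sub, hT'card⟩ := Finset.exists_subset_card_eq (s := T) (n := k) hkT
    set f := T'.orderIsoOfFin hT'card with hf
    set q : Fin k → Pt := fun i => p (f i : ℕ) with hq
    have hmemT : ∀ i : Fin k, ((f i : ℕ)) ∈ T := fun i => hT'sub (f i).2
    have hposq : ∀ i j k' : Fin k, i < j → j < k' → 0 < ESaux.Dt (q i) (q j) (q k') := by
      intro i j k' h1 h2
      have hlt1 : ((f i : ℕ)) < ((f j : ℕ)) := by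
        exact_mod_cast f.strictMono h1
      have hlt2 : ((f j : ℕ)) < ((f k' : ℕ)) := by
        exact_mod_cast f.strictMono h2
      rcases ESaux.colOf_cases _ _
        (hcol _ (hmemT i) _ (hmemT j) _ (hmemT k') hlt1 hlt2) with
        ⟨h', _⟩ | ⟨_, h⟩ | ⟨h', _⟩
      · omega
      · exact h
      · omega
    have hqinj : Function.Injective q := by
      intro i j hij
      have : ((f i : ℕ)) = ((f j : ℕ)) :=
        hpinjT (hmemT i) (hmemT j) hij
      exact f.injective (Subtype.coe_injective this)
    refine ⟨Finset.image q Finset.univ, ?_, ?_, ?_⟩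
    · intro x hx
      obtain ⟨i, -, rfl⟩ := Finset.mem_image.mp hx
      exact hpmem _ (hTN _ (hmemT i))
    · rw [Finset.card_image_of_injective _ hqinj, Finset.card_univ, Fintype.card_fin]
    · exact ESaux.strictConvexPos_of_pos hk q hposq
  · -- negatively oriented case
    right
    have hkT : k ≤ T.card := le_trans (le_max_right l k) hTcard
    obtain ⟨T', hT'sub, hT'card⟩ := Finset.exists_subset_card_eq (s := T) (n := k) hkT
    set f := T'.orderIsoOfFin hT'card with hf
    set q : Fin k → Pt := fun i => p (f i.rev : ℕ) with hq
    have hmemT : ∀ i : Fin k, ((f i : ℕ)) ∈ T := fun i => hT'sub (f i).2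
    have hposq : ∀ i j k' : Fin k, i < j → j < k' → 0 < ESaux.Dt (q i) (q j) (q k') := by
      intro i j k' h1 h2
      have hr1 : k'.rev < j.rev := Fin.rev_lt_rev.mpr h2
      have hr2 : j.rev < i.rev := Fin.rev_lt_rev.mpr h1
      have hlt1 : ((f k'.rev : ℕ)) < ((f j.rev : ℕ)) := by
        exact_mod_cast f.strictMono hr1
      have hlt2 : ((f j.rev : ℕ)) < ((f i.rev : ℕ)) := by
        exact_mod_cast f.strictMono hr2
      have hneg : ESaux.Dt (p (f k'.rev : ℕ)) (p (f j.rev : ℕ)) (p (f i.rev : ℕ)) < 0 := by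
        rcases ESaux.colOf_cases _ _
          (hcol _ (hmemT k'.rev) _ (hmemT j.rev) _ (hmemT i.rev) hlt1 hlt2) with
          ⟨h', _⟩ | ⟨h', _⟩ | ⟨_, h⟩
        · omega
        · omega
        · exact h
      have := ESaux.Dt_rev (p (f k'.rev : ℕ)) (p (f j.rev : ℕ)) (p (f i.rev : ℕ))
      simp only [hq]
      linarith [this, hneg]
    have hqinj : Function.Injective q := by
      intro i j hij
      have h1 : ((f i.rev : ℕ)) = ((f j.rev : ℕ)) :=
        hpinjT (hmemT i.rev) (hmemT j.rev) hij
      have h2 : i.rev = j.rev := f.injective (Subtype.coe_injective h1)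
      exact Fin.rev_injective h2
    refine ⟨Finset.image q Finset.univ, ?_, ?_, ?_⟩
    · intro x hx
      obtain ⟨i, -, rfl⟩ := Finset.mem_image.mp hx
      exact hpmem _ (hTN _ (hmemT i.rev))
    · rw [Finset.card_image_of_injective _ hqinj, Finset.card_univ, Fintype.card_fin]
    · exact ESaux.strictConvexPos_of_pos hk q hposq
end

section
/- If a finite set P of points in the plane contains a 5-hole, then P contains five pairwise visible points. (In particular, the corners of a 5-hole of P of minimum area are pairwise visible with respect to P.) -/
theorem stmt4 (P : Finset Pt) (h : ∃ X : Finset Pt, IsHole P X 5) :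
    ∃ S ⊆ P, S.card = 5 ∧ ∀ v ∈ S, ∀ w ∈ S, v ≠ w → Visible P v w := by
  obtain ⟨X, hXP, hcard, hstrict, hhole⟩ := h
  refine ⟨X, hXP, hcard, ?_⟩
  intro v hv w hw hvw
  refine ⟨hvw, ?_⟩
  apply Set.Subset.antisymm
  · rintro p ⟨hpP, hpseg⟩
    -- p is in conv X ∩ P = X
    have hpX : p ∈ (X : Set Pt) := by
      rw [← hhole]
      refine ⟨?_, hpP⟩
      have : segment ℝ v w ⊆ convexHull ℝ (X : Set Pt) := by
        rw [← convexHull_pair]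
        exact convexHull_mono (by rintro y (rfl | rfl) <;> assumption)
      exact this hpseg
    by_contra hne
    have hpv : p ≠ v := fun h => hne (by simp [h])
    have hpw : p ≠ w := fun h => hne (by simp [h])
    -- p is not a corner of X: contradiction
    have hcorner := hstrict p hpX
    apply hcorner
    have hsub : (X : Set Pt) ⊆ convexHull ℝ ((X : Set Pt) \ {p}) := by
      intro x hx
      by_cases hxp : x = p
      · rw [hxp]
        have hseg : segment ℝ v w ⊆ convexHull ℝ ((X : Set Pt) \ {p}) := by
          rw [← convexHull_pair]
          apply convexHull_mono
          rintro y (rfl | rfl)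
          · exact ⟨hv, fun h => hpv (h.symm)⟩
          · exact ⟨hw, fun h => hpw (h.symm)⟩
        exact hseg hpseg
      · exact subset_convexHull ℝ _ ⟨hx, hxp⟩
    apply Set.Subset.antisymm
    · exact convexHull_mono Set.diff_subset
    · exact convexHull_min hsub (convex_convexHull ℝ _)
  · rintro x (rfl | rfl)
    · exact ⟨hXP hv, left_mem_segment ℝ _ _⟩
    · exact ⟨hXP hw, right_mem_segment ℝ _ _⟩
end

section
/- For all integers ℓ ≥ 3 and odd k ≥ 3, there exists a finite set of exactly (ℓ−1)(k−1)/2 points in the plane in convex position that contains no ℓ collinear points and no k points in strictly convex position. -/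
/- ===== auxiliary development ===== -/

noncomputable section Aux

noncomputable def mypt (a x : ℝ) : Pt := (WithLp.equiv 2 _).symm ![x, 2*a*x - a^2]

@[simp] lemma mypt_apply0 (a x : ℝ) : mypt a x 0 = x := rfl
@[simp] lemma mypt_apply1 (a x : ℝ) : mypt a x 1 = 2*a*x - a^2 := rfl

noncomputable def ff (a : ℝ) (p : Pt) : ℝ := 2*a*(p 0) - p 1

lemma ff_mypt (a b x : ℝ) : ff a (mypt b x) = 2*(a-b)*x + b^2 := by
  simp [ff, mypt]; ring

lemma ff_comb (a u v : ℝ) (x y : Pt) : ff a (u • x + v • y) = u * ff a x + v * ff a y := by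
  simp [ff, PiLp.add_apply, PiLp.smul_apply, smul_eq_mul]; ring

lemma ff_smul_add (a t : ℝ) (v w : Pt) : ff a (t • v + w) = t * ff a v + ff a w := by
  simp [ff, PiLp.add_apply, PiLp.smul_apply, smul_eq_mul]; ring

lemma hull_le (a c : ℝ) (P : Set Pt) (h : ∀ p ∈ P, ff a p ≤ c) :
    ∀ q ∈ convexHull ℝ P, ff a q ≤ c := by
  intro q hq
  have hconv : Convex ℝ {p : Pt | ff a p ≤ c} := by
    intro x hx y hy u v hu hv huv
    simp only [Set.mem_setOf_eq] at hx hy ⊢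
    rw [ff_comb]
    have hc : u*c + v*c = c := by rw [← add_mul, huv, one_mul]
    have h1 := mul_le_mul_of_nonneg_left hx hu
    have h2 := mul_le_mul_of_nonneg_left hy hv
    linarith
  exact convexHull_min h hconv hq

lemma mem_frontier_of_ff (a c : ℝ) (P : Set Pt) (p : Pt) (hp : p ∈ P)
    (hpc : ff a p = c) (h : ∀ x ∈ P, ff a x ≤ c) :
    p ∈ frontier (convexHull ℝ P) := by
  rw [frontier]
  constructor
  · exact subset_closure (subset_convexHull ℝ P hp)
  · intro hint
    rw [mem_interior_iff_mem_nhds, Metric.mem_nhds_iff] at hint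
    obtain ⟨ε, hε, hball⟩ := hint
    set q : Pt := p - (ε/2) • EuclideanSpace.single 1 (1:ℝ) with hq
    have hqball : q ∈ Metric.ball p ε := by
      rw [Metric.mem_ball, dist_eq_norm]
      have h2 : q - p = -((ε/2) • EuclideanSpace.single 1 (1:ℝ)) := by rw [hq]; abel
      rw [h2, norm_neg, norm_smul, EuclideanSpace.norm_single, norm_one, mul_one,
        Real.norm_eq_abs, abs_of_pos (by linarith : (0:ℝ) < ε/2)]
      linarith
    have hle := hull_le a c P h q (hball hqball)
    have : ff a q = c + ε/2 := by
      rw [hq]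
      simp [ff, PiLp.sub_apply, PiLp.smul_apply, EuclideanSpace.single_apply, ← hpc]
      ring
    linarith

lemma not_corner {S : Finset Pt} {p q r : Pt} (hp : p ∈ S) (hr : r ∈ S)
    (hpq : q ≠ p) (hqr : q ≠ r) (hseg : q ∈ segment ℝ p r) :
    ¬ IsCornerOf S q := by
  rw [IsCornerOf, not_ne_iff]
  apply le_antisymm (convexHull_mono (Set.diff_subset))
  apply convexHull_min _ (convex_convexHull ℝ _)
  intro x hx
  by_cases hxq : x = q
  · subst hxq
    have hpr : segment ℝ p r ⊆ convexHull ℝ ((S : Set Pt) \ ({x} : Set Pt)) := by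
      rw [← convexHull_pair]
      apply convexHull_mono
      intro y hy
      rcases hy with rfl | rfl
      · exact ⟨hp, by simpa using hpq.symm⟩
      · exact ⟨hr, by simpa using hqr.symm⟩
    exact hpr hseg
  · exact subset_convexHull ℝ _ ⟨hx, hxq⟩

lemma collinear_mypt (a : ℝ) (s : Set Pt) (h : ∀ p ∈ s, ∃ x, p = mypt a x) :
    Collinear ℝ s := by
  rw [collinear_iff_exists_forall_eq_smul_vadd]
  refine ⟨mypt a 0, mypt a 1 - mypt a 0, fun p hp => ?_⟩
  obtain ⟨x, rfl⟩ := h p hp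
  refine ⟨x, ?_⟩
  ext i
  fin_cases i <;>
    (simp [mypt, PiLp.add_apply, PiLp.sub_apply, PiLp.smul_apply, smul_eq_mul]; try ring)

noncomputable def xc (l i t : ℕ) : ℝ := ((i:ℝ)+1) + (((t:ℝ)+1)/(2*l))

noncomputable def gpt (l i t : ℕ) : Pt := mypt ((i:ℝ)+1) (xc l i t)

noncomputable def cfg (m l : ℕ) : Finset Pt :=
  (Finset.range m ×ˢ Finset.range (l-1)).image (fun it => gpt l it.1 it.2)

lemma mem_cfg {m l : ℕ} {p : Pt} :
    p ∈ cfg m l ↔ ∃ i < m, ∃ t < l - 1, p = gpt l i t := by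
  simp only [cfg, Finset.mem_image, Finset.mem_product, Finset.mem_range, Prod.exists]
  constructor
  · rintro ⟨i, t, ⟨hi, ht⟩, rfl⟩; exact ⟨i, hi, t, ht, rfl⟩
  · rintro ⟨i, hi, t, ht, rfl⟩; exact ⟨i, t, ⟨hi, ht⟩, rfl⟩

lemma xc_bounds {l t : ℕ} (hl : 3 ≤ l) (ht : t < l - 1) (i : ℕ) :
    (i:ℝ)+1 < xc l i t ∧ xc l i t < (i:ℝ)+1+1/2 := by
  have hl0 : (0:ℝ) < 2*l := by positivity
  have ht' : (t:ℝ)+1 < l := by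
    have : t + 1 < l := by omega
    exact_mod_cast this
  constructor
  · have : (0:ℝ) < ((t:ℝ)+1)/(2*l) := by positivity
    unfold xc; linarith
  · have : ((t:ℝ)+1)/(2*l) < 1/2 := by
      rw [div_lt_iff₀ hl0]; linarith
    unfold xc; linarith

lemma ff_gpt_self (l i t : ℕ) : ff ((i:ℝ)+1) (gpt l i t) = ((i:ℝ)+1)^2 := by
  rw [gpt, ff_mypt]; ring

lemma ff_gpt_lt {l i j t : ℕ} (hl : 3 ≤ l) (ht : t < l - 1) (hij : i ≠ j) :
    ff ((i:ℝ)+1) (gpt l j t) < ((i:ℝ)+1)^2 := by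
  obtain ⟨hlo, hhi⟩ := xc_bounds hl ht j
  rw [gpt, ff_mypt]
  rcases lt_or_gt_of_ne hij with h | h
  · have : (i:ℝ)+1 ≤ (j:ℝ) := by exact_mod_cast Nat.succ_le_of_lt h
    nlinarith
  · have : (j:ℝ)+1 ≤ (i:ℝ) := by exact_mod_cast Nat.succ_le_of_lt h
    nlinarith

lemma ff_le_cfg {m l : ℕ} (hl : 3 ≤ l) (i : ℕ) :
    ∀ p ∈ (cfg m l : Set Pt), ff ((i:ℝ)+1) p ≤ ((i:ℝ)+1)^2 := by
  intro p hp
  rw [Finset.mem_coe, mem_cfg] at hp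
  obtain ⟨j, hj, t, ht, rfl⟩ := hp
  by_cases hij : i = j
  · subst hij; rw [ff_gpt_self]
  · exact le_of_lt (ff_gpt_lt hl ht hij)

lemma group_of_ff {m l i : ℕ} (hl : 3 ≤ l) {p : Pt} (hp : p ∈ cfg m l)
    (hff : ff ((i:ℝ)+1) p = ((i:ℝ)+1)^2) : ∃ t < l - 1, p = gpt l i t := by
  rw [mem_cfg] at hp
  obtain ⟨j, hj, t, ht, rfl⟩ := hp
  by_cases hij : i = j
  · subst hij; exact ⟨t, ht, rfl⟩
  · exact absurd hff (ne_of_lt (ff_gpt_lt hl ht hij))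

lemma gpt_inj {l : ℕ} (hl : 3 ≤ l) {i t i' t' : ℕ} (ht : t < l - 1) (ht' : t' < l - 1)
    (h : gpt l i t = gpt l i' t') : i = i' ∧ t = t' := by
  have hi : i = i' := by
    by_contra hne
    have h1 := ff_gpt_lt (i := i) (j := i') hl ht' hne
    rw [← h, ff_gpt_self] at h1
    exact lt_irrefl _ h1
  subst hi
  refine ⟨rfl, ?_⟩
  have hx : xc l i t = xc l i t' := by
    have := congrArg (fun p : Pt => p 0) h
    simpa [gpt] using this
  have hl0 : (0:ℝ) < 2*l := by positivity
  have hx' : ((t:ℝ)+1)/(2*l) = ((t':ℝ)+1)/(2*l) := by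
    unfold xc at hx; linarith
  rw [div_eq_div_iff (ne_of_gt hl0) (ne_of_gt hl0)] at hx'
  have h2 := mul_right_cancel₀ (ne_of_gt hl0) hx'
  have : (t:ℝ) = t' := by linarith
  exact_mod_cast this

lemma cfg_card {m l : ℕ} (hl : 3 ≤ l) : (cfg m l).card = m * (l - 1) := by
  rw [cfg, Finset.card_image_of_injOn, Finset.card_product, Finset.card_range,
    Finset.card_range]
  rintro ⟨i, t⟩ h1 ⟨i', t'⟩ h2 heq
  simp only [Finset.mem_coe, Finset.mem_product, Finset.mem_range] at h1 h2
  obtain ⟨h3, h4⟩ := gpt_inj hl h1.2 h2.2 heq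
  simp only at h3
  simp [h3, h4]

lemma cfg_convexPos {m l : ℕ} (hl : 3 ≤ l) : ConvexPos (cfg m l) := by
  intro p hp
  have hp' := hp
  rw [mem_cfg] at hp'
  obtain ⟨i, hi, t, ht, rfl⟩ := hp'
  exact mem_frontier_of_ff ((i:ℝ)+1) (((i:ℝ)+1)^2) _ _ (by exact_mod_cast hp)
    (ff_gpt_self l i t) (ff_le_cfg hl i)

lemma cfg_collinear_subset {m l : ℕ} (hl : 3 ≤ l) {S : Finset Pt} (hSP : S ⊆ cfg m l)
    (hScol : Collinear ℝ (S : Set Pt)) {x y z : Pt}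
    (hx : x ∈ S) (hy : y ∈ S) (hz : z ∈ S) (hxy : y ≠ x) (hyz : y ≠ z)
    (hw : Wbtw ℝ x y z) : S.card ≤ l - 1 := by
  obtain ⟨i, hi, ty, hty, rfl⟩ := mem_cfg.mp (hSP hy)
  set a : ℝ := (i:ℝ)+1 with ha
  set c : ℝ := ((i:ℝ)+1)^2 with hc
  have hsb : Sbtw ℝ x (gpt l i ty) z := ⟨hw, hxy, hyz⟩
  obtain ⟨s, hs, hys⟩ := hsb.mem_image_Ioo
  have hycomb : gpt l i ty = (1-s) • x + s • z := by
    rw [← hys, AffineMap.lineMap_apply_module]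
  have hffy : ff a (gpt l i ty) = c := ff_gpt_self l i ty
  have hfx : ff a x ≤ c := ff_le_cfg hl i x (hSP hx)
  have hfz : ff a z ≤ c := ff_le_cfg hl i z (hSP hz)
  have hcomb : ff a (gpt l i ty) = (1-s) * ff a x + s * ff a z := by
    rw [hycomb, ff_comb]
  have hfxe : ff a x = c := by
    rcases hs with ⟨hs0, hs1⟩
    nlinarith
  -- x and y are distinct points with ff a = c ; propagate along the line of S
  obtain ⟨p₀, v, hv⟩ := (collinear_iff_exists_forall_eq_smul_vadd ((S : Set Pt))).mp hScol
  obtain ⟨rx, hrx⟩ := hv x hx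
  obtain ⟨ry, hry⟩ := hv (gpt l i ty) hy
  have hrxy : rx ≠ ry := by
    intro hrr
    apply hxy
    rw [hrx, hry, hrr]
  have hffv : ff a v = 0 := by
    have e1 : ff a x = rx * ff a v + ff a p₀ := by
      rw [hrx]; rw [vadd_eq_add]; exact ff_smul_add a rx v p₀
    have e2 : ff a (gpt l i ty) = ry * ff a v + ff a p₀ := by
      rw [hry]; rw [vadd_eq_add]; exact ff_smul_add a ry v p₀
    have q1 : rx * ff a v + ff a p₀ = c := by rw [← e1]; exact hfxe
    have q2 : ry * ff a v + ff a p₀ = c := by rw [← e2]; exact hffy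
    have hz0 : (rx - ry) * ff a v = 0 := by rw [sub_mul]; linarith
    rcases mul_eq_zero.mp hz0 with h | h
    · exact absurd (sub_eq_zero.mp h) hrxy
    · exact h
  have hallc : ∀ p ∈ S, ff a p = c := by
    intro p hpS
    obtain ⟨rp, hrp⟩ := hv p hpS
    have : ff a p = rp * ff a v + ff a p₀ := by
      rw [hrp, vadd_eq_add]; exact ff_smul_add a rp v p₀
    have e2 : ff a (gpt l i ty) = ry * ff a v + ff a p₀ := by
      rw [hry, vadd_eq_add]; exact ff_smul_add a ry v p₀
    rw [this, hffv]
    rw [e2, hffv] at hffy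
    linarith
  have hsub : S ⊆ (Finset.range (l-1)).image (gpt l i) := by
    intro p hpS
    obtain ⟨t, ht, rfl⟩ := group_of_ff hl (hSP hpS) (hallc p hpS)
    exact Finset.mem_image.mpr ⟨t, Finset.mem_range.mpr ht, rfl⟩
  calc S.card ≤ ((Finset.range (l-1)).image (gpt l i)).card := Finset.card_le_card hsub
    _ ≤ l - 1 := le_trans Finset.card_image_le (le_of_eq (Finset.card_range _))

lemma cfg_no_collinear {m l : ℕ} (hl : 3 ≤ l) : ¬ HasCollinear (cfg m l) l := by
  rintro ⟨S, hSP, hScard, hScol⟩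
  have h3 : 2 < S.card := by omega
  obtain ⟨p, q, r, hp, hq, hr, hpq, hpr, hqr⟩ := Finset.two_lt_card_iff.mp h3
  have hcol3 : Collinear ℝ ({p, q, r} : Set Pt) := by
    apply hScol.subset
    intro w hw
    rcases hw with rfl | rfl | rfl <;> simpa
  have hle : S.card ≤ l - 1 := by
    rcases hcol3.wbtw_or_wbtw_or_wbtw with hw | hw | hw
    · exact cfg_collinear_subset hl hSP hScol hp hq hr hpq.symm hqr hw
    · exact cfg_collinear_subset hl hSP hScol hq hr hp hqr.symm hpr.symm hw
    · exact cfg_collinear_subset hl hSP hScol hr hp hq hpr hpq hw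
  omega

noncomputable def gidx (p : Pt) : ℕ := (⌊p 0⌋).toNat - 1

lemma gidx_gpt {l t : ℕ} (hl : 3 ≤ l) (ht : t < l - 1) (i : ℕ) : gidx (gpt l i t) = i := by
  obtain ⟨h1, h2⟩ := xc_bounds hl ht i
  have hfl : ⌊(gpt l i t) 0⌋ = (i:ℤ) + 1 := by
    rw [Int.floor_eq_iff]
    constructor
    · push_cast
      simp only [gpt, mypt_apply0]
      linarith
    · push_cast
      simp only [gpt, mypt_apply0]
      linarith
  rw [gidx, hfl]
  omega

lemma cfg_no_strict {m l : ℕ} (hl : 3 ≤ l) (hm : 1 ≤ m) :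
    ¬ HasStrictConvex (cfg m l) (2*m+1) := by
  rintro ⟨S, hSP, hScard, hstrict⟩
  have hfib : S.card = ∑ i ∈ Finset.range m, (S.filter (fun p => gidx p = i)).card := by
    apply Finset.card_eq_sum_card_fiberwise
    intro p hpS
    obtain ⟨i, hi, t, ht, rfl⟩ := mem_cfg.mp (hSP hpS)
    rw [gidx_gpt hl ht]
    exact Finset.mem_range.mpr hi
  have hex : ∃ i ∈ Finset.range m, 2 < (S.filter (fun p => gidx p = i)).card := by
    by_contra hno
    push_neg at hno
    have : S.card ≤ ∑ i ∈ Finset.range m, 2 := by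
      rw [hfib]
      exact Finset.sum_le_sum fun i hi => by have := hno i hi; omega
    rw [Finset.sum_const, Finset.card_range, smul_eq_mul] at this
    omega
  obtain ⟨i, hi, h3⟩ := hex
  obtain ⟨p, q, r, hp, hq, hr, hpq, hpr, hqr⟩ := Finset.two_lt_card_iff.mp h3
  rw [Finset.mem_filter] at hp hq hr
  have hform : ∀ w ∈ S.filter (fun p => gidx p = i), ∃ x : ℝ, w = mypt ((i:ℝ)+1) x := by
    intro w hw
    rw [Finset.mem_filter] at hw
    obtain ⟨j, hj, t, ht, rfl⟩ := mem_cfg.mp (hSP hw.1)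
    have : j = i := by rw [gidx_gpt hl ht] at hw; exact hw.2
    subst this
    exact ⟨xc l j t, rfl⟩
  have hcol3 : Collinear ℝ ({p, q, r} : Set Pt) := by
    apply collinear_mypt ((i:ℝ)+1)
    intro w hw
    rcases hw with rfl | rfl | rfl
    · exact hform w (Finset.mem_filter.mpr hp)
    · exact hform w (Finset.mem_filter.mpr hq)
    · exact hform w (Finset.mem_filter.mpr hr)
  rcases hcol3.wbtw_or_wbtw_or_wbtw with hw | hw | hw
  · exact not_corner hp.1 hr.1 hpq.symm hqr hw.mem_segment (hstrict q hq.1)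
  · exact not_corner hq.1 hp.1 hqr.symm hpr.symm hw.mem_segment (hstrict r hr.1)
  · exact not_corner hr.1 hq.1 hpr hpq hw.mem_segment (hstrict p hp.1)

end Aux

theorem stmt7 (l k : ℕ) (hl : 3 ≤ l) (hk : 3 ≤ k) (hodd : Odd k) :
    ∃ P : Finset Pt, P.card = (l - 1) * (k - 1) / 2 ∧ ConvexPos P ∧
      ¬ HasCollinear P l ∧ ¬ HasStrictConvex P k := by
  obtain ⟨m, hm⟩ := hodd
  have hm1 : 1 ≤ m := by omega
  refine ⟨cfg m l, ?_, cfg_convexPos hl, cfg_no_collinear hl, ?_⟩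
  · rw [cfg_card hl]
    have h1 : k - 1 = 2*m := by omega
    have h2 : (l-1)*(2*m) = (m*(l-1))*2 := by ring
    rw [h1, h2, Nat.mul_div_cancel _ (by norm_num : 0 < 2)]
  · have : k = 2*m+1 := by omega
    rw [this]
    exact cfg_no_strict hl hm1
end

section
/- For all integers ℓ ≥ 3 and even k ≥ 4, there exists a finite set of exactly (ℓ−1)(k−2)/2 + 1 points in the plane in convex position that contains no ℓ collinear points and no k points in strictly convex position. -/
noncomputable section Stmt8Aux
namespace Stmt8Aux

open Finset

/-- x-coordinate of the `n`-th point. -/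
def xx (l n : ℕ) : ℝ :=
  2 * ((n / (l - 1) : ℕ) : ℝ) + ((n % (l - 1) : ℕ) : ℝ) / ((l : ℝ) - 2)

/-- y-coordinate of the `n`-th point. -/
def yy (l n : ℕ) : ℝ :=
  (4 * ((n / (l - 1) : ℕ) : ℝ) + 1) * xx l n -
    (4 * ((n / (l - 1) : ℕ) : ℝ) ^ 2 + 2 * ((n / (l - 1) : ℕ) : ℝ))

/-- The `n`-th point. -/
def pt (l n : ℕ) : Pt := WithLp.toLp 2 fun t => if t = (0 : Fin 2) then xx l n else yy l n

lemma pt_zero (l n : ℕ) : pt l n 0 = xx l n := by simp [pt]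

lemma pt_one (l n : ℕ) : pt l n 1 = yy l n := by
  simp [pt]

/-- The supporting affine functional for group `a`. -/
def FF (a : ℕ) (p : Pt) : ℝ :=
  p 1 - (4 * (a : ℝ) + 1) * p 0 + (4 * (a : ℝ) ^ 2 + 2 * (a : ℝ))

variable {l : ℕ}

lemma hd (hl : 3 ≤ l) : (1 : ℝ) ≤ (l : ℝ) - 2 := by
  have : (3 : ℝ) ≤ (l : ℝ) := by exact_mod_cast hl
  linarith

lemma jj_le (hl : 3 ≤ l) (n : ℕ) : ((n % (l - 1) : ℕ) : ℝ) ≤ (l : ℝ) - 2 := by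
  have h1 : n % (l - 1) < l - 1 := Nat.mod_lt _ (by omega)
  have h2 : (n % (l - 1)) + 2 ≤ l := by omega
  have := (Nat.cast_le (α := ℝ)).mpr h2
  push_cast at this
  linarith

lemma xx_lb (hl : 3 ≤ l) (n : ℕ) : 2 * ((n / (l - 1) : ℕ) : ℝ) ≤ xx l n := by
  have h1 := hd hl
  have : (0 : ℝ) ≤ ((n % (l - 1) : ℕ) : ℝ) / ((l : ℝ) - 2) :=
    div_nonneg (by positivity) (by linarith)
  unfold xx; linarith

lemma xx_ub (hl : 3 ≤ l) (n : ℕ) : xx l n ≤ 2 * ((n / (l - 1) : ℕ) : ℝ) + 1 := by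
  have h1 := hd hl
  have : ((n % (l - 1) : ℕ) : ℝ) / ((l : ℝ) - 2) ≤ 1 :=
    (div_le_one (by linarith)).mpr (jj_le hl n)
  unfold xx; linarith

lemma FF_eq (l a n : ℕ) :
    FF a (pt l n) = 2 * (((n / (l - 1) : ℕ) : ℝ) - (a : ℝ)) *
      (2 * xx l n - 2 * ((n / (l - 1) : ℕ) : ℝ) - 2 * (a : ℝ) - 1) := by
  rw [FF, pt_zero, pt_one, yy]; ring

lemma FF_ge_two_of_ne (hl : 3 ≤ l) {a n : ℕ} (h : n / (l - 1) ≠ a) :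
    2 ≤ FF a (pt l n) := by
  rw [FF_eq]
  have hub := xx_ub hl n
  have hlb := xx_lb hl n
  rcases Nat.lt_or_ge (n / (l - 1)) a with hlt | hge
  · have : ((n / (l - 1) : ℕ) : ℝ) + 1 ≤ (a : ℝ) := by exact_mod_cast hlt
    nlinarith
  · have hgt : a < n / (l - 1) := by omega
    have : (a : ℝ) + 1 ≤ ((n / (l - 1) : ℕ) : ℝ) := by exact_mod_cast hgt
    nlinarith

lemma FF_nonneg (hl : 3 ≤ l) (a n : ℕ) : 0 ≤ FF a (pt l n) := by
  by_cases h : n / (l - 1) = a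
  · rw [FF_eq, h]; ring_nf; exact le_refl _
  · linarith [FF_ge_two_of_ne hl h]

lemma FF_zero_iff (hl : 3 ≤ l) (a n : ℕ) :
    FF a (pt l n) = 0 ↔ n / (l - 1) = a := by
  constructor
  · intro h
    by_contra hne
    linarith [FF_ge_two_of_ne hl hne]
  · intro h
    rw [FF_eq, h]; ring

lemma xx_strictMono (hl : 3 ≤ l) {n n' : ℕ} (h : n < n') : xx l n < xx l n' := by
  have hpos : 0 < l - 1 := by omega
  have hdm := Nat.div_add_mod n (l - 1)
  have hdm' := Nat.div_add_mod n' (l - 1)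
  have hmod : n % (l - 1) < l - 1 := Nat.mod_lt _ hpos
  have hmod' : n' % (l - 1) < l - 1 := Nat.mod_lt _ hpos
  have hdle : n / (l - 1) ≤ n' / (l - 1) := Nat.div_le_div_right h.le
  have h1 := hd hl
  rcases eq_or_lt_of_le hdle with heq | hlt
  · rw [← heq] at hdm'
    have hjlt : n % (l - 1) < n' % (l - 1) := by
      by_contra hc
      omega
    have hc : ((n % (l - 1) : ℕ) : ℝ) < ((n' % (l - 1) : ℕ) : ℝ) := by exact_mod_cast hjlt
    have hx : ((n % (l - 1) : ℕ) : ℝ) / ((l : ℝ) - 2) <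
        ((n' % (l - 1) : ℕ) : ℝ) / ((l : ℝ) - 2) :=
      div_lt_div_of_pos_right hc (by linarith)
    unfold xx
    rw [heq]
    linarith
  · have hcast : ((n / (l - 1) : ℕ) : ℝ) + 1 ≤ ((n' / (l - 1) : ℕ) : ℝ) := by
      exact_mod_cast hlt
    have := xx_ub hl n
    have := xx_lb hl n'
    linarith

lemma pt_injective (hl : 3 ≤ l) : Function.Injective (pt l) := by
  intro n n' h
  have hx : xx l n = xx l n' := by rw [← pt_zero l n, ← pt_zero l n', h]
  rcases Nat.lt_trichotomy n n' with hlt | heq | hgt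
  · exact absurd hx (ne_of_lt (xx_strictMono hl hlt))
  · exact heq
  · exact absurd hx.symm (ne_of_lt (xx_strictMono hl hgt))

/-- A collinear triple ordered by first coordinate gives a strict convex combination. -/
lemma collinear_between {p q r : Pt} (hpq : p 0 < q 0) (hqr : q 0 < r 0)
    (h : Collinear ℝ ({p, q, r} : Set Pt)) :
    ∃ τ : ℝ, 0 < τ ∧ τ < 1 ∧ q = (1 - τ) • p + τ • r := by
  rw [collinear_iff_exists_forall_eq_smul_vadd] at h
  obtain ⟨p₀, v, hv⟩ := h
  obtain ⟨tp, htp⟩ := hv p (by simp)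
  obtain ⟨tq, htq⟩ := hv q (by simp)
  obtain ⟨tr, htr⟩ := hv r (by simp)
  have hp0 : p 0 = tp * v 0 + p₀ 0 := by
    rw [htp]; simp [PiLp.add_apply, PiLp.smul_apply, smul_eq_mul]
  have hq0 : q 0 = tq * v 0 + p₀ 0 := by
    rw [htq]; simp [PiLp.add_apply, PiLp.smul_apply, smul_eq_mul]
  have hr0 : r 0 = tr * v 0 + p₀ 0 := by
    rw [htr]; simp [PiLp.add_apply, PiLp.smul_apply, smul_eq_mul]
  have h1 : 0 < (tq - tp) * v 0 := by nlinarith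
  have h2 : 0 < (tr - tq) * v 0 := by nlinarith
  have h3 : 0 < (tr - tp) * v 0 := by nlinarith
  have hv0 : v 0 ≠ 0 := by
    intro h0; rw [h0, mul_zero] at h1; exact lt_irrefl _ h1
  have hv2 : 0 < v 0 ^ 2 := by positivity
  have hA : 0 < (tq - tp) * (tr - tp) := by nlinarith [mul_pos h1 h3, hv2]
  have hB : 0 < (tr - tq) * (tr - tp) := by nlinarith [mul_pos h2 h3, hv2]
  have hrp0 : tr - tp ≠ 0 := by
    intro h0; rw [h0, mul_zero] at hA; exact lt_irrefl _ hA
  have hτ0 : 0 < (tq - tp) / (tr - tp) := div_pos_iff.mpr (mul_pos_iff.mp hA)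
  have hτc : 0 < (tr - tq) / (tr - tp) := div_pos_iff.mpr (mul_pos_iff.mp hB)
  have hτ1 : (tq - tp) / (tr - tp) < 1 := by
    have hs : (tq - tp) / (tr - tp) + (tr - tq) / (tr - tp) = 1 := by
      field_simp
      ring
    linarith
  refine ⟨(tq - tp) / (tr - tp), hτ0, hτ1, ?_⟩
  ext j
  have hpj : p j = tp * v j + p₀ j := by
    rw [htp]; simp [PiLp.add_apply, PiLp.smul_apply, smul_eq_mul]
  have hqj : q j = tq * v j + p₀ j := by
    rw [htq]; simp [PiLp.add_apply, PiLp.smul_apply, smul_eq_mul]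
  have hrj : r j = tr * v j + p₀ j := by
    rw [htr]; simp [PiLp.add_apply, PiLp.smul_apply, smul_eq_mul]
  have : ((1 - (tq - tp) / (tr - tp)) • p + ((tq - tp) / (tr - tp)) • r) j
      = (1 - (tq - tp) / (tr - tp)) * p j + ((tq - tp) / (tr - tp)) * r j := by
    simp [PiLp.add_apply, PiLp.smul_apply, smul_eq_mul]
  rw [this, hpj, hqj, hrj]
  field_simp
  ring

/-- Middle point of a sorted collinear triple of `P` lies in the same group as the ends. -/
lemma group_eq_sorted (hl : 3 ≤ l) {a b c : ℕ} (hab : a < b) (hbc : b < c)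
    (h : Collinear ℝ ({pt l a, pt l b, pt l c} : Set Pt)) :
    a / (l - 1) = b / (l - 1) ∧ c / (l - 1) = b / (l - 1) := by
  set g := b / (l - 1) with hg
  obtain ⟨τ, hτ0, hτ1, hq⟩ := collinear_between
    (by rw [pt_zero, pt_zero]; exact xx_strictMono hl hab)
    (by rw [pt_zero, pt_zero]; exact xx_strictMono hl hbc) h
  have hcomb : FF g (pt l b) = (1 - τ) * FF g (pt l a) + τ * FF g (pt l c) := by
    rw [hq]
    simp only [FF, PiLp.add_apply, PiLp.smul_apply, smul_eq_mul]
    ring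
  have hb0 : FF g (pt l b) = 0 := (FF_zero_iff hl g b).mpr rfl
  have ha0 : 0 ≤ FF g (pt l a) := FF_nonneg hl g a
  have hc0 : 0 ≤ FF g (pt l c) := FF_nonneg hl g c
  have h1 : (1 - τ) * FF g (pt l a) = 0 := by nlinarith
  have h2 : τ * FF g (pt l c) = 0 := by nlinarith
  have ha : FF g (pt l a) = 0 := by
    rcases mul_eq_zero.mp h1 with h | h
    · linarith
    · exact h
  have hc : FF g (pt l c) = 0 := by
    rcases mul_eq_zero.mp h2 with h | h
    · linarith
    · exact h
  exact ⟨(FF_zero_iff hl g a).mp ha, (FF_zero_iff hl g c).mp hc⟩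

/-- Sorting helper for three distinct naturals. -/
lemma sort3 {a b c : ℕ} (hab : a ≠ b) (hac : a ≠ c) (hbc : b ≠ c) :
    ∃ x y z : ℕ, x < y ∧ y < z ∧
      (x = a ∨ x = b ∨ x = c) ∧ (y = a ∨ y = b ∨ y = c) ∧ (z = a ∨ z = b ∨ z = c) ∧
      (a = x ∨ a = y ∨ a = z) ∧ (b = x ∨ b = y ∨ b = z) ∧ (c = x ∨ c = y ∨ c = z) := by
  refine ⟨min a (min b c), a + b + c - min a (min b c) - max a (max b c),
    max a (max b c), ?_, ?_, ?_, ?_, ?_, ?_, ?_, ?_⟩ <;> omega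

/-- Any collinear triple of distinct points of `P` lies in a single group. -/
lemma group_eq_of_collinear (hl : 3 ≤ l) {a b c : ℕ} (hab : a ≠ b) (hac : a ≠ c)
    (hbc : b ≠ c) (h : Collinear ℝ ({pt l a, pt l b, pt l c} : Set Pt)) :
    a / (l - 1) = b / (l - 1) := by
  obtain ⟨x, y, z, hxy, hyz, hx, hy, hz, ha, hb, hc⟩ := sort3 hab hac hbc
  have hsub : ({pt l x, pt l y, pt l z} : Set Pt) ⊆ ({pt l a, pt l b, pt l c} : Set Pt) := by
    intro w hw
    rcases hw with rfl | rfl | rfl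
    · rcases hx with rfl | rfl | rfl <;> simp
    · rcases hy with rfl | rfl | rfl <;> simp
    · rcases hz with rfl | rfl | rfl <;> simp
  obtain ⟨e1, e2⟩ := group_eq_sorted hl hxy hyz (h.subset hsub)
  rcases ha with rfl | rfl | rfl <;> rcases hb with rfl | rfl | rfl <;> omega

/-- The middle point of three same-group points lies in the segment of the outer two. -/
lemma mid_mem_segment (hl : 3 ≤ l) {x y z : ℕ} (hxy : x < y) (hyz : y < z)
    (hgx : x / (l - 1) = y / (l - 1)) (hgz : z / (l - 1) = y / (l - 1)) :
    pt l y ∈ segment ℝ (pt l x) (pt l z) := by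
  have h1 : xx l x < xx l y := xx_strictMono hl hxy
  have h2 : xx l y < xx l z := xx_strictMono hl hyz
  set τ : ℝ := (xx l y - xx l x) / (xx l z - xx l x) with hτ
  have hzx : (0 : ℝ) < xx l z - xx l x := by linarith
  have hτ0 : 0 < τ := div_pos (by linarith) hzx
  have hτ1 : τ < 1 := (div_lt_one hzx).mpr (by linarith)
  refine ⟨1 - τ, τ, by linarith, hτ0.le, by ring, ?_⟩
  have hx0 : (1 - τ) * xx l x + τ * xx l z = xx l y := by
    rw [hτ]
    field_simp
    ring
  ext j
  have happ : ((1 - τ) • pt l x + τ • pt l z) j = (1 - τ) * pt l x j + τ * pt l z j := by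
    simp [PiLp.add_apply, PiLp.smul_apply, smul_eq_mul]
  rw [happ]
  fin_cases j
  · show (1 - τ) * pt l x 0 + τ * pt l z 0 = pt l y 0
    rw [pt_zero, pt_zero, pt_zero]; exact hx0
  · show (1 - τ) * pt l x 1 + τ * pt l z 1 = pt l y 1
    rw [pt_one, pt_one, pt_one]
    unfold yy
    rw [hgx, hgz]
    nlinarith [hx0]

end Stmt8Aux
end Stmt8Aux

theorem stmt8 (l k : ℕ) (hl : 3 ≤ l) (hk : 4 ≤ k) (heven : Even k) :
    ∃ P : Finset Pt, P.card = (l - 1) * (k - 2) / 2 + 1 ∧ ConvexPos P ∧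
      ¬ HasCollinear P l ∧ ¬ HasStrictConvex P k := by
  classical
  open Stmt8Aux in
  set m : ℕ := (k - 2) / 2 with hm
  have hk2 : k - 2 = 2 * m := by
    obtain ⟨t, ht⟩ := heven
    omega
  set N : ℕ := m * (l - 1) with hN
  set P : Finset Pt := (Finset.range (N + 1)).image (pt l) with hP
  have hinj := pt_injective hl
  have hcard : P.card = N + 1 := by
    rw [hP, Finset.card_image_of_injective _ hinj, Finset.card_range]
  refine ⟨P, ?_, ?_, ?_, ?_⟩
  · -- cardinality
    rw [hcard]
    have h1 : (l - 1) * (k - 2) = (m * (l - 1)) * 2 := by rw [hk2]; ring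
    rw [h1, Nat.mul_div_cancel _ (by norm_num)]
  · -- convex position
    intro p hp
    obtain ⟨n, hn, rfl⟩ := Finset.mem_image.mp hp
    set g : ℕ := n / (l - 1) with hg
    refine ⟨subset_closure (subset_convexHull ℝ _ (Finset.mem_coe.mpr hp)), ?_⟩
    intro hint
    rw [mem_interior_iff_mem_nhds] at hint
    obtain ⟨ε, hε, hball⟩ := Metric.mem_nhds_iff.mp hint
    set H : Set Pt :=
      {w : Pt | -(4 * (g : ℝ) ^ 2 + 2 * (g : ℝ)) ≤ w 1 - (4 * (g : ℝ) + 1) * w 0} with hH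
    have hconv : Convex ℝ H := by
      have hlin : IsLinearMap ℝ (fun w : Pt => w 1 - (4 * (g : ℝ) + 1) * w 0) := by
        constructor
        · intro a b; simp [PiLp.add_apply]; ring
        · intro c a; simp [PiLp.smul_apply, smul_eq_mul]; ring
      exact convex_halfSpace_ge hlin _
    have hPH : (P : Set Pt) ⊆ H := by
      intro w hw
      obtain ⟨n', _, rfl⟩ := Finset.mem_image.mp (Finset.mem_coe.mp hw)
      have h := FF_nonneg hl g n'
      simp only [FF] at h
      show -(4 * (g : ℝ) ^ 2 + 2 * (g : ℝ)) ≤ _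
      linarith
    have hhull : convexHull ℝ (P : Set Pt) ⊆ H := convexHull_min hPH hconv
    set q : Pt := pt l n - (ε / 2) • EuclideanSpace.single (1 : Fin 2) (1 : ℝ) with hq
    have hqball : q ∈ Metric.ball (pt l n) ε := by
      rw [Metric.mem_ball, dist_eq_norm]
      have h1 : q - pt l n = -((ε / 2) • EuclideanSpace.single (1 : Fin 2) (1 : ℝ)) := by
        rw [hq]; abel
      rw [h1, norm_neg, norm_smul, EuclideanSpace.norm_single]
      simp [abs_of_pos hε]
      linarith
    have hqH : q ∈ H := hhull (hball hqball)
    have hq1 : q 1 = pt l n 1 - ε / 2 := by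
      rw [hq]
      simp [PiLp.sub_apply, PiLp.smul_apply, EuclideanSpace.single_apply, smul_eq_mul]
    have hq0 : q 0 = pt l n 0 := by
      rw [hq]
      simp [PiLp.sub_apply, PiLp.smul_apply, EuclideanSpace.single_apply, smul_eq_mul]
    have hzero : FF g (pt l n) = 0 := (FF_zero_iff hl g n).mpr rfl
    simp only [FF] at hzero
    have : -(4 * (g : ℝ) ^ 2 + 2 * (g : ℝ)) ≤ q 1 - (4 * (g : ℝ) + 1) * q 0 := hqH
    rw [hq1, hq0] at this
    linarith
  · -- no l collinear points
    rintro ⟨S, hSP, hScard, hcol⟩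
    obtain ⟨T, hTsub, rfl⟩ := Finset.subset_image_iff.mp hSP
    have hTcard : T.card = l := by
      rwa [Finset.card_image_of_injective _ hinj] at hScard
    have hT3 : 3 ≤ T.card := by omega
    obtain ⟨n₀, hn₀⟩ : T.Nonempty := Finset.card_pos.mp (by omega)
    have hclaim : ∀ n ∈ T, n / (l - 1) = n₀ / (l - 1) := by
      intro n hn
      by_cases hnn : n = n₀
      · rw [hnn]
      · have hne : (T \ {n, n₀}).Nonempty := by
          rw [← Finset.card_pos]
          have h1 : T.card ≤ (T \ {n, n₀}).card + ({n, n₀} : Finset ℕ).card :=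
            Finset.card_le_card_sdiff_add_card
          have h2 : ({n, n₀} : Finset ℕ).card ≤ 2 := Finset.card_insert_le _ _ |>.trans (by simp)
          omega
        obtain ⟨n₁, hn₁⟩ := hne
        rw [Finset.mem_sdiff, Finset.mem_insert, Finset.mem_singleton] at hn₁
        obtain ⟨hn₁T, hn₁ne⟩ := hn₁
        push_neg at hn₁ne
        have hsub : ({pt l n, pt l n₀, pt l n₁} : Set Pt) ⊆ ↑(T.image (pt l)) := by
          intro w hw
          simp only [Set.mem_insert_iff, Set.mem_singleton_iff] at hw
          rcases hw with rfl | rfl | rfl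
          · exact Finset.mem_coe.mpr (Finset.mem_image_of_mem _ hn)
          · exact Finset.mem_coe.mpr (Finset.mem_image_of_mem _ hn₀)
          · exact Finset.mem_coe.mpr (Finset.mem_image_of_mem _ hn₁T)
        exact group_eq_of_collinear hl hnn (fun h => hn₁ne.1 h.symm)
          (fun h => hn₁ne.2 h.symm) (hcol.subset hsub)
    set g : ℕ := n₀ / (l - 1) with hg
    have hTIco : T ⊆ Finset.Ico ((l - 1) * g) ((l - 1) * g + (l - 1)) := by
      intro n hn
      have hcl := hclaim n hn
      have hdm := Nat.div_add_mod n (l - 1)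
      rw [hcl] at hdm
      have hmod : n % (l - 1) < l - 1 := Nat.mod_lt _ (by omega)
      rw [Finset.mem_Ico]
      omega
    have := Finset.card_le_card hTIco
    rw [Nat.card_Ico] at this
    omega
  · -- no k points in strictly convex position
    rintro ⟨S, hSP, hScard, hstrict⟩
    obtain ⟨T, hTsub, rfl⟩ := Finset.subset_image_iff.mp hSP
    have hTcard : T.card = k := by
      rwa [Finset.card_image_of_injective _ hinj] at hScard
    set T' : Finset ℕ := T.erase N with hT'
    have hT'card : 2 * m + 1 ≤ T'.card := by
      rw [hT']
      have h1 := Finset.pred_card_le_card_erase (s := T) (a := N)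
      omega
    have hmaps : ∀ n ∈ T', n / (l - 1) ∈ Finset.range m := by
      intro n hn
      have hnT : n ∈ T := Finset.mem_of_mem_erase hn
      have hne : n ≠ N := Finset.ne_of_mem_erase hn
      have hlt : n < N := by
        have := Finset.mem_range.mp (hTsub hnT)
        omega
      rw [Finset.mem_range]
      rw [Nat.div_lt_iff_lt_mul (by omega : 0 < l - 1)]
      omega
    obtain ⟨g, _, hgfib⟩ := Finset.exists_lt_card_fiber_of_mul_lt_card_of_maps_to
      (t := Finset.range m) (n := 2) hmaps (by rw [Finset.card_range]; omega)
    obtain ⟨V, hVsub, hVcard⟩ := Finset.exists_subset_card_eq hgfib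
    obtain ⟨a, b, c, hab, hac, hbc, hVeq⟩ := Finset.card_eq_three.mp hVcard
    rw [hVeq] at hVsub
    have hmem : ∀ w ∈ ({a, b, c} : Finset ℕ), w ∈ T ∧ w / (l - 1) = g := by
      intro w hw
      have := Finset.mem_filter.mp (hVsub hw)
      exact ⟨Finset.mem_of_mem_erase this.1, this.2⟩
    obtain ⟨haT, hag⟩ := hmem a (by simp)
    obtain ⟨hbT, hbg⟩ := hmem b (by simp)
    obtain ⟨hcT, hcg⟩ := hmem c (by simp)
    obtain ⟨x, y, z, hxy, hyz, hx, hy, hz, _, _, _⟩ := Stmt8Aux.sort3 hab hac hbc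
    have hxT : x ∈ T := by rcases hx with rfl | rfl | rfl <;> assumption
    have hyT : y ∈ T := by rcases hy with rfl | rfl | rfl <;> assumption
    have hzT : z ∈ T := by rcases hz with rfl | rfl | rfl <;> assumption
    have hxg : x / (l - 1) = g := by rcases hx with rfl | rfl | rfl <;> assumption
    have hyg : y / (l - 1) = g := by rcases hy with rfl | rfl | rfl <;> assumption
    have hzg : z / (l - 1) = g := by rcases hz with rfl | rfl | rfl <;> assumption
    have hmid : pt l y ∈ segment ℝ (pt l x) (pt l z) :=
      mid_mem_segment hl hxy hyz (by rw [hxg, hyg]) (by rw [hzg, hyg])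
    have hyS : pt l y ∈ T.image (pt l) := Finset.mem_image_of_mem _ hyT
    have hxS : pt l x ∈ (↑(T.image (pt l)) : Set Pt) \ {pt l y} := by
      refine ⟨Finset.mem_coe.mpr (Finset.mem_image_of_mem _ hxT), ?_⟩
      simp only [Set.mem_singleton_iff]
      intro h
      exact absurd (hinj h) (by omega)
    have hzS : pt l z ∈ (↑(T.image (pt l)) : Set Pt) \ {pt l y} := by
      refine ⟨Finset.mem_coe.mpr (Finset.mem_image_of_mem _ hzT), ?_⟩
      simp only [Set.mem_singleton_iff]
      intro h
      exact absurd (hinj h) (by omega)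
    have hin : pt l y ∈ convexHull ℝ ((↑(T.image (pt l)) : Set Pt) \ {pt l y}) :=
      segment_subset_convexHull hxS hzS hmid
    have hEq : convexHull ℝ ((↑(T.image (pt l)) : Set Pt) \ {pt l y}) =
        convexHull ℝ (↑(T.image (pt l)) : Set Pt) := by
      refine le_antisymm (convexHull_mono Set.diff_subset) ?_
      refine convexHull_min ?_ (convex_convexHull ℝ _)
      intro w hw
      by_cases hwy : w = pt l y
      · rw [hwy]; exact hin
      · exact subset_convexHull ℝ _ ⟨hw, hwy⟩
    exact hstrict (pt l y) hyS hEq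
end

section
/- For every finite set P of points in the plane there exists an injective map f : P → ℝ² such that the image f(P) is in general position, and for every subset S ⊆ P, if f(S) is in convex position then S is in convex position. -/
open Metric MeasureTheory Pointwise

lemma span_ne_top (u v : Pt) : affineSpan ℝ ({u, v} : Set Pt) ≠ ⊤ := by
  intro h
  have hc : Collinear ℝ ({u, v} : Set Pt) := collinear_pair ℝ u v
  rw [collinear_iff_finrank_le_one] at hc
  rw [← direction_affineSpan ℝ ({u, v} : Set Pt), h, AffineSubspace.direction_top] at hc
  have : Module.finrank ℝ Pt = 2 := finrank_euclideanSpace_fin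
  rw [finrank_top] at hc
  omega

lemma measure_span (u v : Pt) : volume ((affineSpan ℝ ({u, v} : Set Pt) : Set Pt)) = 0 :=
  Measure.addHaar_affineSubspace volume _ (span_ne_top u v)

lemma ball_sub_of_thick {D : Set Pt} (hD : Convex ℝ D) (hDc : IsClosed D)
    (hne : D.Nonempty) {p : Pt} {r ε : ℝ} (hε : 0 < ε)
    (h : ball p r ⊆ D + closedBall (0:Pt) ε) : ball p (r - ε) ⊆ D := by
  intro x hx
  by_contra hxD
  obtain ⟨φ, u, hu, hxu⟩ := geometric_hahn_banach_closed_point hD hDc hxD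
  obtain ⟨d, hd⟩ := hne
  have hφ : φ ≠ 0 := by
    intro h0
    have h1 := hu d hd
    rw [h0] at h1 hxu
    simp at h1 hxu
    linarith
  set w := (InnerProductSpace.toDual ℝ Pt).symm φ with hwdef
  have hw : ∀ z, (inner ℝ w z : ℝ) = φ z := fun z => InnerProductSpace.toDual_symm_apply
  have hwnorm : ‖w‖ = ‖φ‖ := (InnerProductSpace.toDual ℝ Pt).symm.norm_map φ
  have hw0 : w ≠ 0 := by
    intro h0
    apply hφ
    have : ‖φ‖ = 0 := by rw [← hwnorm, h0, norm_zero]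
    exact norm_eq_zero.mp this
  have hwpos : (0:ℝ) < ‖w‖ := norm_pos_iff.mpr hw0
  set v := ‖w‖⁻¹ • w with hvdef
  have hvnorm : ‖v‖ = 1 := by
    rw [hvdef, norm_smul, norm_inv, norm_norm, inv_mul_cancel₀ (ne_of_gt hwpos)]
  have hφv : φ v = ‖φ‖ := by
    rw [← hw, hvdef, real_inner_smul_right, real_inner_self_eq_norm_sq, ← hwnorm]
    field_simp
  have hz : x + ε • v ∈ ball p r := by
    rw [mem_ball] at hx ⊢
    calc dist (x + ε • v) p ≤ dist (x + ε • v) x + dist x p := dist_triangle _ _ _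
      _ < ε + (r - ε) := by
          apply add_lt_add_of_le_of_lt _ hx
          rw [dist_eq_norm, add_sub_cancel_left, norm_smul, hvnorm]
          simp [abs_of_pos hε, le_refl]
      _ = r := by ring
  obtain ⟨d', hd', b, hb, hsum⟩ := h hz
  have hφb : φ b ≤ ‖φ‖ * ε := by
    calc φ b ≤ |φ b| := le_abs_self _
      _ ≤ ‖φ‖ * ‖b‖ := φ.le_opNorm b
      _ ≤ ‖φ‖ * ε := by
          apply mul_le_mul_of_nonneg_left _ (norm_nonneg φ)
          simpa [mem_closedBall, dist_eq_norm] using hb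
  have h1 : φ (x + ε • v) = φ x + ε * ‖φ‖ := by
    rw [map_add, φ.map_smul]
    simp [hφv, smul_eq_mul]
  have h2 : φ (x + ε • v) = φ d' + φ b := by rw [← hsum, map_add]
  have h3 := hu d' hd'
  nlinarith [hxu]


lemma exists_perturb (P : Finset Pt) : ∀ ε : ℝ, 0 < ε →
    ∃ f : Pt → Pt, Set.InjOn f (P : Set Pt) ∧ GenPos (P.image f) ∧
      ∀ p ∈ P, dist (f p) p < ε := by
  classical
  induction P using Finset.induction_on with
  | empty =>
      intro ε hε
      exact ⟨id, by simp [Set.InjOn], by intro S hS hc; simp at hS; simp [hS] at hc, by simp⟩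
  | @insert a P ha IH =>
      intro ε hε
      obtain ⟨f, hinj, hgen, hdist⟩ := IH ε hε
      set Q := P.image f with hQ
      set B : Set Pt := ⋃ u ∈ (Q : Set Pt), ⋃ v ∈ (Q : Set Pt),
        (affineSpan ℝ ({u, v} : Set Pt) : Set Pt) with hB
      have hBnull : volume B = 0 := by
        rw [hB]
        refine (measure_biUnion_null_iff Q.countable_toSet).mpr fun u _ => ?_
        exact (measure_biUnion_null_iff Q.countable_toSet).mpr fun v _ => measure_span u v
      have hball : 0 < volume (ball a ε) := measure_ball_pos volume a hε
      have hy : ∃ y, y ∈ ball a ε ∧ y ∉ B := by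
        by_contra hcon
        push_neg at hcon
        have : ball a ε ⊆ B := fun y hy => hcon y hy
        have := measure_mono (μ := volume) this
        rw [hBnull] at this
        exact absurd (le_antisymm this (zero_le)) (ne_of_gt hball)
      obtain ⟨y, hyball, hyB⟩ := hy
      have hyQ : y ∉ (Q : Set Pt) := by
        intro hyQ
        apply hyB
        refine Set.mem_biUnion hyQ (Set.mem_biUnion hyQ ?_)
        exact subset_affineSpan ℝ _ (Set.mem_insert _ _)
      set f' := Function.update f a y with hf'
      have hfP : ∀ x ∈ P, f' x = f x := fun x hx =>
        Function.update_of_ne (ne_of_mem_of_not_mem hx ha) _ _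
      have himg : P.image f' = P.image f := Finset.image_congr fun x hx => hfP x hx
      have himg2 : (insert a P).image f' = insert y (P.image f) := by
        rw [Finset.image_insert, himg, hf', Function.update_self]
      refine ⟨f', ?_, ?_, ?_⟩
      · rw [Finset.coe_insert]
        intro x₁ h₁ x₂ h₂ heq
        have hmem : ∀ x, x ∈ insert a (P : Set Pt) → x ≠ a → x ∈ (P : Set Pt) := by
          intro x hx hxa
          rcases Set.mem_insert_iff.mp hx with h | h
          · exact absurd h hxa
          · exact h
        by_cases e₁ : x₁ = a <;> by_cases e₂ : x₂ = a
        · rw [e₁, e₂]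
        · exfalso
          have hx₂ : x₂ ∈ (P : Set Pt) := hmem x₂ h₂ e₂
          rw [e₁, hf', Function.update_self, Function.update_of_ne e₂] at heq
          exact hyQ (heq ▸ Finset.mem_coe.mpr (Finset.mem_image_of_mem f (Finset.mem_coe.mp hx₂)))
        · exfalso
          have hx₁ : x₁ ∈ (P : Set Pt) := hmem x₁ h₁ e₁
          rw [e₂, hf', Function.update_self, Function.update_of_ne e₁] at heq
          exact hyQ (heq.symm ▸ Finset.mem_coe.mpr (Finset.mem_image_of_mem f (Finset.mem_coe.mp hx₁)))
        · have hx₁ : x₁ ∈ (P : Set Pt) := hmem x₁ h₁ e₁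
          have hx₂ : x₂ ∈ (P : Set Pt) := hmem x₂ h₂ e₂
          rw [hfP x₁ (Finset.mem_coe.mp hx₁), hfP x₂ (Finset.mem_coe.mp hx₂)] at heq
          exact hinj hx₁ hx₂ heq
      · rw [himg2]
        intro T hT hcard hcol
        by_cases hyT : y ∈ T
        · set T' := T.erase y with hT'
          have hT'sub : T' ⊆ Q := by
            intro z hz
            rcases Finset.mem_insert.mp (hT (Finset.mem_of_mem_erase hz)) with rfl | h
            · exact absurd rfl (Finset.ne_of_mem_erase hz)
            · exact h
          have hT'card : T'.card = 2 := by
            rw [hT', Finset.card_erase_of_mem hyT, hcard]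
          obtain ⟨u, v, huv, hT'eq⟩ := Finset.card_eq_two.mp hT'card
          have huQ : u ∈ Q := hT'sub (hT'eq ▸ Finset.mem_insert_self u {v})
          have hvQ : v ∈ Q := hT'sub (hT'eq ▸ Finset.mem_insert_of_mem (Finset.mem_singleton_self v))
          have huT : u ∈ (T : Set Pt) := Finset.mem_coe.mpr
            (Finset.mem_of_mem_erase (hT'eq ▸ Finset.mem_insert_self u {v} : u ∈ T'))
          have hvT : v ∈ (T : Set Pt) := Finset.mem_coe.mpr
            (Finset.mem_of_mem_erase (hT'eq ▸ Finset.mem_insert_of_mem (Finset.mem_singleton_self v) : v ∈ T'))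
          have hymem : y ∈ affineSpan ℝ ({u, v} : Set Pt) :=
            hcol.mem_affineSpan_of_mem_of_ne huT hvT (Finset.mem_coe.mpr hyT) huv
          exact hyB (Set.mem_biUnion huQ (Set.mem_biUnion hvQ hymem))
        · have : T ⊆ Q := by
            intro z hz
            rcases Finset.mem_insert.mp (hT hz) with rfl | h
            · exact absurd hz hyT
            · exact h
          exact hgen T this hcard hcol
      · intro p hp
        rcases Finset.mem_insert.mp hp with rfl | hpP
        · rw [hf', Function.update_self]
          exact mem_ball.mp hyball
        · rw [hfP p hpP]
          exact hdist p hpP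



theorem stmt9 (P : Finset Pt) :
    ∃ f : Pt → Pt, Set.InjOn f (P : Set Pt) ∧ GenPos (P.image f) ∧
      ∀ S ⊆ P, ConvexPos (S.image f) → ConvexPos S := by
  classical
  set g : Finset Pt → ℝ := fun S =>
    if h : ∃ r, 0 < r ∧ ∃ p ∈ S, ball p r ⊆ convexHull ℝ (S : Set Pt) then h.choose else 1
    with hg
  have hgpos : ∀ S, 0 < g S := by
    intro S
    rw [hg]
    dsimp only
    split_ifs with h
    · exact h.choose_spec.1
    · norm_num
  have hgspec : ∀ S : Finset Pt, (∃ r, 0 < r ∧ ∃ p ∈ S, ball p r ⊆ convexHull ℝ (S : Set Pt)) →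
      ∃ p ∈ (S : Finset Pt), ball p (g S) ⊆ convexHull ℝ (S : Set Pt) := by
    intro S h
    rw [hg]
    dsimp only
    rw [dif_pos h]
    exact h.choose_spec.2
  have hPne : (∅ : Finset Pt) ∈ P.powerset := Finset.mem_powerset.mpr (Finset.empty_subset P)
  set ε := (P.powerset.inf' ⟨∅, hPne⟩ g) / 3 with hεdef
  have hε : 0 < ε := by
    apply div_pos _ (by norm_num : (0:ℝ) < 3)
    refine (Finset.lt_inf'_iff _).2 ?_
    exact fun S _ => hgpos S
  obtain ⟨f, hinj, hgen, hdist⟩ := exists_perturb P ε hε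
  refine ⟨f, hinj, hgen, ?_⟩
  intro S hSP hconv
  by_contra hnc
  rw [ConvexPos] at hnc
  push_neg at hnc
  obtain ⟨p, hpS, hpfr⟩ := hnc
  have hpint : p ∈ interior (convexHull ℝ (S : Set Pt)) := by
    have hpc : p ∈ convexHull ℝ (S : Set Pt) := subset_convexHull ℝ _ hpS
    by_contra hpi
    exact hpfr ⟨subset_closure hpc, hpi⟩
  have hex : ∃ r, 0 < r ∧ ∃ q ∈ S, ball q r ⊆ convexHull ℝ (S : Set Pt) := by
    obtain ⟨r, hr, hball⟩ := Metric.mem_nhds_iff.mp (mem_interior_iff_mem_nhds.mp hpint)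
    exact ⟨r, hr, p, hpS, hball⟩
  obtain ⟨q, hqS, hball⟩ := hgspec S hex
  set r := g S with hrdef
  have hrpos : 0 < r := hgpos S
  have hεr : ε ≤ r / 3 := by
    have h1 : P.powerset.inf' ⟨∅, hPne⟩ g ≤ g S :=
      Finset.inf'_le g (Finset.mem_powerset.mpr hSP)
    rw [hεdef, hrdef]
    linarith
  have hsub : convexHull ℝ (S : Set Pt) ⊆
      convexHull ℝ ((S.image f : Finset Pt) : Set Pt) + closedBall (0 : Pt) ε := by
    apply convexHull_min _ (Convex.add (convex_convexHull ℝ _) (convex_closedBall _ _))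
    intro z hz
    refine ⟨f z, subset_convexHull ℝ _ ?_, z - f z, ?_, by simp⟩
    · rw [Finset.coe_image]
      exact Set.mem_image_of_mem f hz
    · rw [mem_closedBall, dist_zero_right]
      have h2 := hdist z (hSP (Finset.mem_coe.mp hz))
      rw [dist_eq_norm] at h2
      rw [← norm_neg]
      simpa [neg_sub] using h2.le
  have hDne : (convexHull ℝ ((S.image f : Finset Pt) : Set Pt)).Nonempty :=
    ⟨f q, subset_convexHull ℝ _ (by rw [Finset.coe_image]; exact Set.mem_image_of_mem f hqS)⟩
  have hkey : ball q (r - ε) ⊆ convexHull ℝ ((S.image f : Finset Pt) : Set Pt) :=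
    ball_sub_of_thick (convex_convexHull ℝ _)
      ((S.image f).finite_toSet.isClosed_convexHull ℝ) hDne hε (hball.trans hsub)
  have hfq : f q ∈ ball q (r - ε) := by
    rw [mem_ball]
    have h1 := hdist q (hSP hqS)
    linarith
  have hfqint : f q ∈ interior (convexHull ℝ ((S.image f : Finset Pt) : Set Pt)) :=
    interior_maximal hkey isOpen_ball hfq
  have hfqfr := hconv (f q) (Finset.mem_image_of_mem f hqS)
  rw [← closure_diff_interior] at hfqfr
  exact hfqfr.2 hfqint
end

section
/- For all integers k ≥ 3 and ℓ ≥ 3, every finite set of at least (ℓ−3)·C(ES(k)−1, 2) + ES(k) points in the plane contains ℓ collinear points or k points in strictly convex position; equivalently, ES(k,ℓ) ≤ (ℓ−3)·C(ES(k)−1, 2) + ES(k). -/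
set_option maxHeartbeats 1000000

-- ===================== Ramsey theory =====================

def r2 : ℕ → ℕ → ℕ
  | 0, _ => 0
  | _ + 1, 0 => 0
  | s + 1, t + 1 => r2 s (t + 1) + r2 (s + 1) t + 1

section Ramsey
variable {α : Type*} [DecidableEq α]

theorem ramsey2 (s t : ℕ) (c : Finset α → Prop) (V : Finset α) (hV : r2 s t ≤ V.card) :
    ∃ S ⊆ V, (S.card = s ∧ ∀ T ⊆ S, T.card = 2 → c T) ∨
             (S.card = t ∧ ∀ T ⊆ S, T.card = 2 → ¬ c T) := by
  classical
  induction s generalizing t V with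
  | zero =>
    exact ⟨∅, Finset.empty_subset _, Or.inl ⟨rfl, by intro T hT hT2; simp [Finset.subset_empty.1 hT] at hT2⟩⟩
  | succ s ihs =>
    induction t generalizing V with
    | zero =>
      exact ⟨∅, Finset.empty_subset _, Or.inr ⟨rfl, by intro T hT hT2; simp [Finset.subset_empty.1 hT] at hT2⟩⟩
    | succ t iht =>
      rw [r2] at hV
      have hVne : V.Nonempty := Finset.card_pos.1 (by omega)
      obtain ⟨v, hv⟩ := hVne
      set W := V.erase v with hW
      have hWcard : W.card = V.card - 1 := Finset.card_erase_of_mem hv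
      set A := W.filter (fun w => c {v, w}) with hA
      set B := W.filter (fun w => ¬ c {v, w}) with hB
      have hAB : A.card + B.card = W.card := Finset.card_filter_add_card_filter_not _
      have hcase : r2 s (t+1) ≤ A.card ∨ r2 (s+1) t ≤ B.card := by omega
      rcases hcase with hca | hcb
      · obtain ⟨S, hSA, hS⟩ := ihs (t+1) A hca
        rcases hS with ⟨hcard, hclq⟩ | ⟨hcard, hclq⟩
        · refine ⟨insert v S, ?_, Or.inl ⟨?_, ?_⟩⟩
          · intro x hx
            rcases Finset.mem_insert.1 hx with rfl | hx
            · exact hv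
            · exact Finset.erase_subset _ _ (Finset.filter_subset _ _ (hSA hx))
          · rw [Finset.card_insert_of_notMem, hcard]
            intro hvS
            exact Finset.notMem_erase v V (Finset.filter_subset _ _ (hSA hvS))
          · intro T hT hT2
            by_cases hvT : v ∈ T
            · obtain ⟨w, hw⟩ : ∃ w, T.erase v = {w} := Finset.card_eq_one.1 (by
                rw [Finset.card_erase_of_mem hvT, hT2])
              have hwS : w ∈ S := by
                have : w ∈ T.erase v := hw ▸ Finset.mem_singleton_self w
                have hwT := Finset.mem_of_mem_erase this
                have hwne : w ≠ v := Finset.ne_of_mem_erase this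
                rcases Finset.mem_insert.1 (hT hwT) with h | h
                · exact absurd h hwne
                · exact h
              have hTvw : T = {v, w} := by
                rw [← Finset.insert_erase hvT, hw]
              rw [hTvw]
              have := hSA hwS
              rw [hA, Finset.mem_filter] at this
              exact this.2
            · refine hclq T (fun x hx => ?_) hT2
              rcases Finset.mem_insert.1 (hT hx) with rfl | h
              · exact absurd hx hvT
              · exact h
        · exact ⟨S, hSA.trans ((Finset.filter_subset _ _).trans (Finset.erase_subset _ _)),
            Or.inr ⟨hcard, hclq⟩⟩
      · obtain ⟨S, hSB, hS⟩ := iht B hcb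
        rcases hS with ⟨hcard, hclq⟩ | ⟨hcard, hclq⟩
        · exact ⟨S, hSB.trans ((Finset.filter_subset _ _).trans (Finset.erase_subset _ _)),
            Or.inl ⟨hcard, hclq⟩⟩
        · refine ⟨insert v S, ?_, Or.inr ⟨?_, ?_⟩⟩
          · intro x hx
            rcases Finset.mem_insert.1 hx with rfl | hx
            · exact hv
            · exact Finset.erase_subset _ _ (Finset.filter_subset _ _ (hSB hx))
          · rw [Finset.card_insert_of_notMem, hcard]
            intro hvS
            exact Finset.notMem_erase v V (Finset.filter_subset _ _ (hSB hvS))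
          · intro T hT hT2
            by_cases hvT : v ∈ T
            · obtain ⟨w, hw⟩ : ∃ w, T.erase v = {w} := Finset.card_eq_one.1 (by
                rw [Finset.card_erase_of_mem hvT, hT2])
              have hwS : w ∈ S := by
                have : w ∈ T.erase v := hw ▸ Finset.mem_singleton_self w
                have hwT := Finset.mem_of_mem_erase this
                have hwne : w ≠ v := Finset.ne_of_mem_erase this
                rcases Finset.mem_insert.1 (hT hwT) with h | h
                · exact absurd h hwne
                · exact h
              have hTvw : T = {v, w} := by
                rw [← Finset.insert_erase hvT, hw]
              rw [hTvw]
              have := hSB hwS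
              rw [hB, Finset.mem_filter] at this
              exact this.2
            · refine hclq T (fun x hx => ?_) hT2
              rcases Finset.mem_insert.1 (hT hx) with rfl | h
              · exact absurd hx hvT
              · exact h
end Ramsey


def r3 : ℕ → ℕ → ℕ
  | 0, _ => 0
  | _ + 1, 0 => 0
  | s + 1, t + 1 => r2 (r3 s (t + 1)) (r3 (s + 1) t) + 1

section
variable {α : Type*} [DecidableEq α]

lemma insert_erase_triple {v : α} {S T : Finset α} (hT : T ⊆ insert v S) (hvS : v ∉ S)
    (hT3 : T.card = 3) (hvT : v ∈ T) :
    T.erase v ⊆ S ∧ (T.erase v).card = 2 ∧ T = insert v (T.erase v) ∧ v ∉ T.erase v := by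
  refine ⟨?_, ?_, (Finset.insert_erase hvT).symm, Finset.notMem_erase _ _⟩
  · intro x hx
    rcases Finset.mem_insert.1 (hT (Finset.mem_of_mem_erase hx)) with rfl | h
    · exact absurd rfl (Finset.ne_of_mem_erase hx)
    · exact h
  · rw [Finset.card_erase_of_mem hvT, hT3]

theorem ramsey3 (s t : ℕ) (c : Finset α → Prop) (V : Finset α)
    (hV : r3 s t ≤ V.card) :
    ∃ S ⊆ V, (S.card = s ∧ ∀ T ⊆ S, T.card = 3 → c T) ∨
             (S.card = t ∧ ∀ T ⊆ S, T.card = 3 → ¬ c T) := by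
  classical
  induction s generalizing t V with
  | zero =>
    exact ⟨∅, Finset.empty_subset _, Or.inl ⟨rfl, by intro T hT hT3; simp [Finset.subset_empty.1 hT] at hT3⟩⟩
  | succ s ihs =>
    induction t generalizing V with
    | zero =>
      exact ⟨∅, Finset.empty_subset _, Or.inr ⟨rfl, by intro T hT hT3; simp [Finset.subset_empty.1 hT] at hT3⟩⟩
    | succ t iht =>
      rw [r3] at hV
      obtain ⟨v, hv⟩ : V.Nonempty := Finset.card_pos.1 (by omega)
      have hWcard : r2 (r3 s (t+1)) (r3 (s+1) t) ≤ (V.erase v).card := by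
        rw [Finset.card_erase_of_mem hv]; omega
      obtain ⟨M, hMW, hM⟩ := ramsey2 (r3 s (t+1)) (r3 (s+1) t)
        (fun e => c (insert v e)) (V.erase v) hWcard
      have hMV : M ⊆ V := hMW.trans (Finset.erase_subset _ _)
      have hvM : v ∉ M := fun h => Finset.notMem_erase v V (hMW h)
      rcases hM with ⟨hMcard, hMpairs⟩ | ⟨hMcard, hMpairs⟩
      · obtain ⟨S, hSM, hS⟩ := ihs (t+1) M (le_of_eq hMcard.symm)
        rcases hS with ⟨hcard, hclq⟩ | ⟨hcard, hclq⟩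
        · have hvS : v ∉ S := fun h => hvM (hSM h)
          refine ⟨insert v S, Finset.insert_subset hv (hSM.trans hMV), Or.inl ⟨?_, ?_⟩⟩
          · rw [Finset.card_insert_of_notMem hvS, hcard]
          · intro T hT hT3
            by_cases hvT : v ∈ T
            · obtain ⟨he, he2, heq, _⟩ := insert_erase_triple hT hvS hT3 hvT
              rw [heq]
              exact hMpairs _ (he.trans hSM) he2
            · exact hclq T (fun x hx => (Finset.mem_insert.1 (hT hx)).resolve_left
                (fun h => hvT (h ▸ hx))) hT3
        · exact ⟨S, hSM.trans hMV, Or.inr ⟨hcard, hclq⟩⟩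
      · obtain ⟨S, hSM, hS⟩ := iht M (le_of_eq hMcard.symm)
        rcases hS with ⟨hcard, hclq⟩ | ⟨hcard, hclq⟩
        · exact ⟨S, hSM.trans hMV, Or.inl ⟨hcard, hclq⟩⟩
        · have hvS : v ∉ S := fun h => hvM (hSM h)
          refine ⟨insert v S, Finset.insert_subset hv (hSM.trans hMV), Or.inr ⟨?_, ?_⟩⟩
          · rw [Finset.card_insert_of_notMem hvS, hcard]
          · intro T hT hT3
            by_cases hvT : v ∈ T
            · obtain ⟨he, he2, heq, _⟩ := insert_erase_triple hT hvS hT3 hvT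
              rw [heq]
              exact hMpairs _ (he.trans hSM) he2
            · exact hclq T (fun x hx => (Finset.mem_insert.1 (hT hx)).resolve_left
                (fun h => hvT (h ▸ hx))) hT3
end


-- ===================== cross product geometry =====================

def cross (a b c : Pt) : ℝ :=
  (b 0 - a 0) * (c 1 - a 1) - (b 1 - a 1) * (c 0 - a 0)

lemma Pt.ext_iff' {x y : Pt} : x = y ↔ x 0 = y 0 ∧ x 1 = y 1 := by
  constructor
  · rintro rfl; exact ⟨rfl, rfl⟩
  · rintro ⟨h0, h1⟩; ext i; fin_cases i <;> assumption


lemma cross_cyclic (a b c : Pt) : cross a b c = cross c a b := by unfold cross; ring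
lemma cross_self_left (a b : Pt) : cross a b a = 0 := by unfold cross; ring
lemma cross_self_right (a b : Pt) : cross a b b = 0 := by unfold cross; ring

lemma cross_affine (u v x y : Pt) (a b : ℝ) (hab : a + b = 1) :
    cross u v (a • x + b • y) = a * cross u v x + b * cross u v y := by
  have hb : b = 1 - a := by linarith
  subst hb
  simp only [cross, PiLp.add_apply, PiLp.smul_apply, smul_eq_mul]
  ring

lemma halfspace_convex (u v : Pt) : Convex ℝ {x : Pt | 0 ≤ cross u v x} := by
  intro x hx y hy a b ha hb hab
  simp only [Set.mem_setOf_eq] at *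
  rw [cross_affine u v x y a b hab]
  have := mul_nonneg ha hx
  have := mul_nonneg hb hy
  linarith

lemma cup_convexPos {n : ℕ} (hn : 3 ≤ n) (f : Fin n → Pt)
    (hc : ∀ i j m : Fin n, i < j → j < m → 0 < cross (f i) (f j) (f m)) :
    ConvexPos (Finset.image f Finset.univ) := by
  intro p hp
  obtain ⟨j, -, hj⟩ := Finset.mem_image.1 hp
  obtain ⟨u, v, huv, hp', hcons⟩ :
      ∃ u v : Fin n, u < v ∧ (p = f u ∨ p = f v) ∧
        ∀ m : Fin n, m ≠ u → m ≠ v → m < u ∨ v < m := by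
    by_cases hj1 : (j : ℕ) + 1 < n
    · refine ⟨j, ⟨j + 1, hj1⟩, by simp [Fin.lt_def], Or.inl hj.symm, ?_⟩
      intro m hmu hmv
      simp only [ne_eq, Fin.ext_iff, Fin.val_mk] at hmu hmv
      simp only [Fin.lt_def, Fin.val_mk]
      omega
    · have hj2 : (j : ℕ) = n - 1 := by have := j.isLt; omega
      refine ⟨⟨(j : ℕ) - 1, by omega⟩, j, by rw [Fin.lt_def]; simp; omega, Or.inr hj.symm, ?_⟩
      intro m hmu hmv
      simp only [ne_eq, Fin.ext_iff, Fin.val_mk] at hmu hmv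
      simp only [Fin.lt_def, Fin.val_mk]
      have := m.isLt
      omega
  obtain ⟨m₀, hm₀⟩ : ∃ m₀ : Fin n, m₀ < u ∨ v < m₀ := by
    by_cases h0 : 0 < (u : ℕ)
    · exact ⟨⟨0, by omega⟩, Or.inl (by rw [Fin.lt_def]; simpa using h0)⟩
    · have hu0 : (u : ℕ) = 0 := by omega
      have hv1 : 1 ≤ (v : ℕ) := by have := huv; rw [Fin.lt_def] at this; omega
      by_cases h2 : (v : ℕ) = 1
      · exact ⟨⟨2, by omega⟩, Or.inr (by rw [Fin.lt_def]; simp; omega)⟩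
      · exfalso
        rcases hcons ⟨1, by omega⟩ (by simp only [ne_eq, Fin.ext_iff]; omega)
            (by simp only [ne_eq, Fin.ext_iff]; omega) with h | h <;>
          (rw [Fin.lt_def] at h; simp at h; omega)
  set u' := f u with hu'
  set v' := f v with hv'
  have hF0 : cross u' v' p = 0 := by
    rcases hp' with rfl | rfl
    · exact cross_self_left _ _
    · exact cross_self_right _ _
  have hFnn : ∀ m : Fin n, 0 ≤ cross u' v' (f m) := by
    intro m
    by_cases hmu : m = u
    · subst hmu; exact le_of_eq (cross_self_left _ _).symm
    by_cases hmv : m = v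
    · subst hmv; exact le_of_eq (cross_self_right _ _).symm
    rcases hcons m hmu hmv with h | h
    · rw [cross_cyclic]
      exact le_of_lt (hc m u v h huv)
    · exact le_of_lt (hc u v m huv h)
  have hFpos : 0 < cross u' v' (f m₀) := by
    rcases hm₀ with h | h
    · rw [cross_cyclic]
      exact hc m₀ u v h huv
    · exact hc u v m₀ huv h
  have hhull : convexHull ℝ ((Finset.image f Finset.univ : Finset Pt) : Set Pt) ⊆
      {x : Pt | 0 ≤ cross u' v' x} := by
    apply convexHull_min _ (halfspace_convex u' v')
    intro x hx
    obtain ⟨m, -, rfl⟩ := Finset.mem_image.1 hx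
    exact hFnn m
  have hclosed : IsClosed (convexHull ℝ ((Finset.image f Finset.univ : Finset Pt) : Set Pt)) :=
    (Finset.finite_toSet _).isClosed_convexHull ℝ
  have hpnotint : p ∉ interior (convexHull ℝ ((Finset.image f Finset.univ : Finset Pt) : Set Pt)) := by
    intro hpint
    rw [mem_interior_iff_mem_nhds, Metric.mem_nhds_iff] at hpint
    obtain ⟨ε, hε, hball⟩ := hpint
    set A := v' 1 - u' 1 with hA
    set B := v' 0 - u' 0 with hB
    have hABpos : 0 < A * A + B * B := by
      rcases (show A ≠ 0 ∨ B ≠ 0 by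
        by_contra hcon
        push_neg at hcon
        have : cross u' v' (f m₀) = 0 := by
          unfold cross
          rw [← hA, ← hB, hcon.1, hcon.2]; ring
        linarith) with h | h
      · nlinarith [mul_self_pos.2 h, mul_self_nonneg B]
      · nlinarith [mul_self_pos.2 h, mul_self_nonneg A]
    set g : Pt := EuclideanSpace.single 0 (-A) + EuclideanSpace.single 1 B with hg
    have hg0 : g 0 = -A := by simp [hg, EuclideanSpace.single_apply]
    have hg1 : g 1 = B := by simp [hg, EuclideanSpace.single_apply]
    set δ : ℝ := ε / (2 * (‖g‖ + 1)) with hδ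
    have hgn : (0:ℝ) ≤ ‖g‖ := norm_nonneg g
    have hδpos : 0 < δ := by positivity
    set q : Pt := p - δ • g with hq
    have hqball : q ∈ Metric.ball p ε := by
      rw [Metric.mem_ball, dist_eq_norm]
      have : q - p = -(δ • g) := by rw [hq]; abel
      rw [this, norm_neg, norm_smul, Real.norm_eq_abs, abs_of_pos hδpos]
      calc δ * ‖g‖ ≤ δ * (‖g‖ + 1) := by nlinarith
        _ = ε * (‖g‖ + 1) / (2 * (‖g‖ + 1)) := by rw [hδ]; ring
        _ < ε := by rw [div_lt_iff₀ (by positivity)]; nlinarith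
    have hqH : 0 ≤ cross u' v' q := hhull (hball hqball)
    have e0 : q 0 = p 0 + δ * A := by
      simp only [hq, PiLp.sub_apply, PiLp.smul_apply, smul_eq_mul, hg0]; ring
    have e1 : q 1 = p 1 - δ * B := by
      simp only [hq, PiLp.sub_apply, PiLp.smul_apply, smul_eq_mul, hg1]
    have hqval : cross u' v' q = cross u' v' p - δ * (A * A + B * B) := by
      unfold cross
      rw [e0, e1, ← hA, ← hB]
      ring
    rw [hqval, hF0] at hqH
    nlinarith
  have hpmem : p ∈ convexHull ℝ ((Finset.image f Finset.univ : Finset Pt) : Set Pt) :=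
    subset_convexHull ℝ _ hp
  rw [hclosed.frontier_eq]
  exact ⟨hpmem, hpnotint⟩

lemma cross_rev (a b c : Pt) : cross c b a = - cross a b c := by unfold cross; ring

lemma collinear_of_cross_eq_zero {a b c : Pt} (h : cross a b c = 0) :
    Collinear ℝ ({a, b, c} : Set Pt) := by
  by_cases hab : b = a
  · subst hab; rw [Set.insert_comm, Set.insert_eq_self.2 (by simp)]; exact collinear_pair ℝ _ _
  · rw [collinear_iff_of_mem (Set.mem_insert a _)]
    refine ⟨b - a, ?_⟩
    intro p hp
    rcases hp with rfl | rfl | rfl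
    · exact ⟨0, by simp⟩
    · exact ⟨1, by simp⟩
    · have hb : b 0 - a 0 ≠ 0 ∨ b 1 - a 1 ≠ 0 := by
        by_contra hcon
        push_neg at hcon
        exact hab (Pt.ext_iff'.2 ⟨by linarith [hcon.1], by linarith [hcon.2]⟩)
      unfold cross at h
      rcases hb with h0 | h0
      · refine ⟨(p 0 - a 0) / (b 0 - a 0), Pt.ext_iff'.2 ⟨?_, ?_⟩⟩ <;>
          simp only [vadd_eq_add, PiLp.add_apply, PiLp.smul_apply, PiLp.sub_apply, smul_eq_mul] <;>
          field_simp <;> nlinarith [h]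
      · refine ⟨(p 1 - a 1) / (b 1 - a 1), Pt.ext_iff'.2 ⟨?_, ?_⟩⟩ <;>
          simp only [vadd_eq_add, PiLp.add_apply, PiLp.smul_apply, PiLp.sub_apply, smul_eq_mul] <;>
          field_simp <;> nlinarith [h]


-- ===================== Step C =====================

lemma not_collinear_of_genPos {S : Finset Pt} (h3 : 3 ≤ S.card) (hgen : GenPos S) :
    ¬ Collinear ℝ (S : Set Pt) := by
  intro hcol
  obtain ⟨T, hTS, hT3⟩ := Finset.exists_subset_card_eq h3
  exact hgen T hTS hT3 (hcol.subset (by exact_mod_cast Finset.coe_subset.2 hTS))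


lemma finrank_Pt : Module.finrank ℝ Pt = 2 := by simp

lemma collinear_of_not_affineSpan_top {s : Set Pt} (hne : s.Nonempty)
    (h : affineSpan ℝ s ≠ ⊤) : Collinear ℝ s := by
  rw [collinear_iff_rank_le_one]
  have hd : (affineSpan ℝ s).direction ≠ ⊤ := fun hd' =>
    h ((AffineSubspace.direction_eq_top_iff_of_nonempty
      ((affineSpan_nonempty ℝ).2 hne)).1 hd')
  have := Submodule.finrank_lt (s := (affineSpan ℝ s).direction) hd
  rw [finrank_Pt] at this
  rw [← direction_affineSpan]
  have hfr : Module.finrank ℝ (affineSpan ℝ s).direction ≤ 1 := by omega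
  calc Module.rank ℝ (affineSpan ℝ s).direction
      = (Module.finrank ℝ (affineSpan ℝ s).direction : Cardinal) := by
        rw [Module.finrank_eq_rank]
    _ ≤ 1 := by exact_mod_cast hfr

lemma convexPos_strictConvexPos {S : Finset Pt} (h3 : 3 ≤ S.card) (hgen : GenPos S)
    (hconv : ConvexPos S) : StrictConvexPos S := by
  intro v hv heq
  -- heq : convexHull (S \ {v}) = convexHull S
  have hncol : ¬ Collinear ℝ (S : Set Pt) := not_collinear_of_genPos h3 hgen
  have hspan : affineSpan ℝ ((S : Set Pt)) = ⊤ := by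
    by_contra h
    exact hncol (collinear_of_not_affineSpan_top ⟨v, hv⟩ h)
  have hconvS : Convex ℝ (convexHull ℝ (S : Set Pt)) := convex_convexHull ℝ _
  have hint : (interior (convexHull ℝ (S : Set Pt))).Nonempty := by
    rw [hconvS.interior_nonempty_iff_affineSpan_eq_top, affineSpan_convexHull]
    exact hspan
  obtain ⟨x, hx⟩ := hint
  have hvfront := hconv v hv
  have hvnotint : v ∉ interior (convexHull ℝ (S : Set Pt)) := fun h => hvfront.2 h
  obtain ⟨f, hf⟩ := geometric_hahn_banach_open_point hconvS.interior isOpen_interior hvnotint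
  -- hf : ∀ a ∈ interior hull, f a < f v
  have hle : ∀ s ∈ (S : Set Pt), f s ≤ f v := by
    intro s hs
    by_contra hgt
    push_neg at hgt
    -- consider z t = t • x + (1-t) • s ∈ interior for t ∈ (0,1]
    set t : ℝ := min (1/2) ((f s - f v) / (2 * (|f x - f s| + 1))) with ht
    have htpos : 0 < t := by
      apply lt_min (by norm_num)
      apply div_pos (by linarith) (by positivity)
    have htle : t ≤ 1/2 := min_le_left _ _
    have hz : t • x + (1 - t) • s ∈ interior (convexHull ℝ (S : Set Pt)) :=
      hconvS.combo_interior_self_mem_interior hx (subset_convexHull ℝ _ hs) htpos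
        (by linarith) (by ring)
    have hfz := hf _ hz
    rw [map_add, map_smul, map_smul] at hfz
    simp only [smul_eq_mul] at hfz
    -- f z = t f x + (1-t) f s = f s + t (f x - f s)
    have habs : t * (|f x - f s| + 1) ≤ (f s - f v) / 2 := by
      have h' : t ≤ (f s - f v) / (2 * (|f x - f s| + 1)) := min_le_right _ _
      have h'' : t * (2 * (|f x - f s| + 1)) ≤ f s - f v :=
        (le_div_iff₀ (by positivity)).1 h'
      linarith
    have h1 : f s - t * (|f x - f s| + 1) ≤ t * f x + (1 - t) * f s := by
      have := abs_le.1 (le_refl |f x - f s|)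
      have h2 : -(|f x - f s|) ≤ f x - f s := neg_abs_le _
      nlinarith
    linarith
  -- v is in the hull of the others
  have hvin : v ∈ convexHull ℝ ((S.erase v : Finset Pt) : Set Pt) := by
    rw [Finset.coe_erase, heq]
    exact subset_convexHull ℝ _ (by exact_mod_cast hv)
  rw [Finset.convexHull_eq] at hvin
  obtain ⟨w, hw0, hw1, hwc⟩ := hvin
  have hcm : ∑ y ∈ S.erase v, w y • y = v := by
    have h := Finset.centerMass_eq_of_sum_1 (S.erase v) id hw1
    rw [hwc] at h
    simpa using h.symm
  classical
  set T : Finset Pt := (S.erase v).filter (fun y => w y ≠ 0) with hT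
  have hTsub : T ⊆ S.erase v := Finset.filter_subset _ _
  have hTw1 : ∑ y ∈ T, w y = 1 := by
    rw [hT, Finset.sum_filter_of_ne (fun x _ hx => hx)]
    exact hw1
  have hTcm : ∑ y ∈ T, w y • y = v := by
    have hzero : ∑ y ∈ (S.erase v).filter (fun y => ¬ w y ≠ 0), w y • y = 0 :=
      Finset.sum_eq_zero (fun y hy => by
        rcases Finset.mem_filter.1 hy with ⟨-, h⟩
        push_neg at h
        rw [h, zero_smul])
    have h2 := Finset.sum_filter_add_sum_filter_not (S.erase v) (fun y => w y ≠ 0)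
      (fun y => w y • y)
    rw [hzero, add_zero] at h2
    rw [hT, h2]
    exact hcm
  have hfv : ∑ y ∈ T, w y * f y = f v := by
    have := congrArg f hTcm
    rw [map_sum] at this
    simpa [smul_eq_mul] using this
  have hTpos : ∀ y ∈ T, 0 < w y := by
    intro y hy
    rcases (Finset.mem_filter.1 hy) with ⟨hy1, hy2⟩
    exact lt_of_le_of_ne (hw0 y hy1) (Ne.symm hy2)
  have hfeq : ∀ y ∈ T, f y = f v := by
    intro y hy
    by_contra hne
    have hylt : f y < f v :=
      lt_of_le_of_ne (hle y (Finset.mem_coe.2 (Finset.mem_of_mem_erase (hTsub hy)))) hne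
    have hlt : ∑ z ∈ T, w z * f z < ∑ z ∈ T, w z * f v := by
      apply Finset.sum_lt_sum
      · intro i hi
        exact mul_le_mul_of_nonneg_left
          (hle i (Finset.mem_coe.2 (Finset.mem_of_mem_erase (hTsub hi)))) (le_of_lt (hTpos i hi))
      · exact ⟨y, hy, by have := hTpos y hy; nlinarith⟩
    rw [hfv, ← Finset.sum_mul, hTw1, one_mul] at hlt
    exact lt_irrefl _ hlt
  -- T has at least two elements
  have hT2 : 1 < T.card := by
    by_contra hc
    push_neg at hc
    interval_cases h : T.card
    · rw [Finset.card_eq_zero] at h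
      rw [h, Finset.sum_empty] at hTw1
      norm_num at hTw1
    · obtain ⟨t, ht⟩ := Finset.card_eq_one.1 h
      rw [ht, Finset.sum_singleton] at hTw1 hTcm
      rw [hTw1, one_smul] at hTcm
      have : t ∈ T := ht ▸ Finset.mem_singleton_self t
      exact Finset.ne_of_mem_erase (hTsub this) hTcm
  obtain ⟨t1, ht1, t2, ht2, ht12⟩ := Finset.one_lt_card.1 hT2
  -- build direction vector for the level line of f
  have hfx : f x < f v := hf x hx
  set a : ℝ := f (EuclideanSpace.single 0 1) with ha
  set b : ℝ := f (EuclideanSpace.single 1 1) with hb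
  have hrep : ∀ y : Pt, f y = y 0 * a + y 1 * b := by
    intro y
    have hy : y = y 0 • (EuclideanSpace.single (0 : Fin 2) (1:ℝ)) +
        y 1 • EuclideanSpace.single (1 : Fin 2) (1:ℝ) := by
      ext i
      fin_cases i <;>
        simp [EuclideanSpace.single_apply]
    conv_lhs => rw [hy]
    rw [map_add, map_smul, map_smul]
    simp [smul_eq_mul, mul_comm, ha, hb]
  set u : Pt := EuclideanSpace.single 0 (-b) + EuclideanSpace.single 1 a with hu
  have hu0 : u 0 = -b := by simp [hu, EuclideanSpace.single_apply]
  have hu1 : u 1 = a := by simp [hu, EuclideanSpace.single_apply]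
  have hker : ∀ p : Pt, f p = f v → ∃ r : ℝ, p = r • u + v := by
    intro p hp
    have hd : (p 0 - v 0) * a + (p 1 - v 1) * b = 0 := by
      rw [hrep p, hrep v] at hp
      ring_nf
      ring_nf at hp
      linarith
    by_cases hA : a = 0
    · have hB : b ≠ 0 := by
        intro hB
        rw [hrep x, hrep v, hA, hB] at hfx
        simp at hfx
      have hd1 : p 1 = v 1 := by
        rw [hA] at hd
        have h2 : (p 1 - v 1) * b = 0 := by linarith
        rcases mul_eq_zero.1 h2 with h | h
        · linarith
        · exact absurd h hB
      refine ⟨(v 0 - p 0) / b, Pt.ext_iff'.2 ⟨?_, ?_⟩⟩ <;>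
        simp only [PiLp.add_apply, PiLp.smul_apply, smul_eq_mul, hu0, hu1, hA]
      · field_simp
        ring
      · rw [hd1]; ring
    · refine ⟨(p 1 - v 1) / a, Pt.ext_iff'.2 ⟨?_, ?_⟩⟩ <;>
        simp only [PiLp.add_apply, PiLp.smul_apply, smul_eq_mul, hu0, hu1]
      · field_simp
        linear_combination hd
      · field_simp; ring
  have hcol : Collinear ℝ ({v, t1, t2} : Set Pt) := by
    rw [collinear_iff_of_mem (Set.mem_insert v _)]
    refine ⟨u, ?_⟩
    rintro p hp
    rcases hp with h | h | h
    · exact ⟨0, by rw [h]; simp⟩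
    · obtain ⟨r, hr⟩ := hker t1 (hfeq t1 ht1)
      exact ⟨r, by rw [h]; exact hr⟩
    · obtain ⟨r, hr⟩ := hker t2 (hfeq t2 ht2)
      exact ⟨r, by rw [h]; exact hr⟩
  -- contradiction with general position
  have ht1S : t1 ∈ S := Finset.mem_of_mem_erase (hTsub ht1)
  have ht2S : t2 ∈ S := Finset.mem_of_mem_erase (hTsub ht2)
  have ht1v : t1 ≠ v := Finset.ne_of_mem_erase (hTsub ht1)
  have ht2v : t2 ≠ v := Finset.ne_of_mem_erase (hTsub ht2)
  refine hgen {v, t1, t2} ?_ ?_ ?_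
  · intro z hz
    rcases Finset.mem_insert.1 hz with rfl | hz
    · exact hv
    rcases Finset.mem_insert.1 hz with rfl | hz
    · exact ht1S
    · rw [Finset.mem_singleton.1 hz]; exact ht2S
  · rw [Finset.card_insert_of_notMem, Finset.card_insert_of_notMem, Finset.card_singleton]
    · simp [ht12]
    · simp only [Finset.mem_insert, Finset.mem_singleton]
      push_neg
      exact ⟨Ne.symm ht1v, Ne.symm ht2v⟩
  · simpa using hcol


-- ===================== happy ending =====================

noncomputable instance ptLO : LinearOrder Pt :=
  LinearOrder.lift' (fun p : Pt => toLex (p 0, p 1)) (by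
    intro x y h
    have h2 : (x 0, x 1) = (y 0, y 1) := toLex.injective h
    exact Pt.ext_iff'.2 ⟨congrArg Prod.fst h2, congrArg Prod.snd h2⟩)

lemma triple_eq {a b c a' b' c' : Pt} (hab : a < b) (hbc : b < c) (hab' : a' < b')
    (hbc' : b' < c') (h : ({a, b, c} : Finset Pt) = {a', b', c'}) :
    a = a' ∧ b = b' ∧ c = c' := by
  have hmem : ∀ x : Pt, x ∈ ({a, b, c} : Finset Pt) ↔ x = a ∨ x = b ∨ x = c := by
    intro x; simp [Finset.mem_insert]
  have hmem' : ∀ x : Pt, x ∈ ({a', b', c'} : Finset Pt) ↔ x = a' ∨ x = b' ∨ x = c' := by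
    intro x; simp [Finset.mem_insert]
  have haR : a = a' ∨ a = b' ∨ a = c' := (hmem' a).1 (h ▸ (hmem a).2 (Or.inl rfl))
  have haL : a' = a ∨ a' = b ∨ a' = c := (hmem a').1 (h ▸ (hmem' a').2 (Or.inl rfl))
  have hcR : c = a' ∨ c = b' ∨ c = c' := (hmem' c).1 (h ▸ (hmem c).2 (Or.inr (Or.inr rfl)))
  have hcL : c' = a ∨ c' = b ∨ c' = c := (hmem c').1 (h ▸ (hmem' c').2 (Or.inr (Or.inr rfl)))
  have ha : a = a' := by
    have h1 : a' ≤ a := by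
      rcases haR with h | h | h
      · exact le_of_eq h.symm
      · rw [h]; exact le_of_lt hab'
      · rw [h]; exact le_of_lt (lt_trans hab' hbc')
    have h2 : a ≤ a' := by
      rcases haL with h | h | h
      · exact le_of_eq h.symm
      · rw [h]; exact le_of_lt hab
      · rw [h]; exact le_of_lt (lt_trans hab hbc)
    exact le_antisymm h2 h1
  have hc : c = c' := by
    have h1 : c ≤ c' := by
      rcases hcR with h | h | h
      · rw [h]; exact le_of_lt (lt_trans hab' hbc')
      · rw [h]; exact le_of_lt hbc'
      · exact le_of_eq h
    have h2 : c' ≤ c := by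
      rcases hcL with h | h | h
      · rw [h]; exact le_of_lt (lt_trans hab hbc)
      · rw [h]; exact le_of_lt hbc
      · exact le_of_eq h
    exact le_antisymm h1 h2
  refine ⟨ha, ?_, hc⟩
  have hbR : b = a' ∨ b = b' ∨ b = c' := (hmem' b).1 (h ▸ (hmem b).2 (Or.inr (Or.inl rfl)))
  rcases hbR with h1 | h1 | h1
  · exfalso; rw [h1, ← ha] at hab; exact lt_irrefl _ hab
  · exact h1
  · exfalso; rw [h1, ← hc] at hbc; exact lt_irrefl _ hbc

lemma happyEnd (k : ℕ) (hk : 3 ≤ k) (P : Finset Pt) (hgen : GenPos P)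
    (hcard : r3 k k ≤ P.card) : HasConvex P k := by
  classical
  set cT : Finset Pt → Prop :=
    fun T => ∃ a b c : Pt, a < b ∧ b < c ∧ T = {a, b, c} ∧ 0 < cross a b c with hcT
  obtain ⟨S, hSP, hS⟩ := ramsey3 k k cT P hcard
  -- common facts
  have key : ∀ (hSk : S.card = k) (hclq : ∀ T ⊆ S, T.card = 3 → cT T)
      (a b c : Pt), a ∈ S → b ∈ S → c ∈ S → a < b → b < c → 0 < cross a b c := by
    intro hSk hclq a b c haS hbS hcS hab hbc
    have hsub : ({a, b, c} : Finset Pt) ⊆ S := by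
      intro x hx
      rcases Finset.mem_insert.1 hx with rfl | hx
      · exact haS
      rcases Finset.mem_insert.1 hx with rfl | hx
      · exact hbS
      · rw [Finset.mem_singleton.1 hx]; exact hcS
    have hcard3 : ({a, b, c} : Finset Pt).card = 3 := by
      rw [Finset.card_insert_of_notMem, Finset.card_insert_of_notMem, Finset.card_singleton]
      · simp only [Finset.mem_singleton]; exact ne_of_lt hbc
      · simp only [Finset.mem_insert, Finset.mem_singleton]
        push_neg
        exact ⟨ne_of_lt hab, ne_of_lt (lt_trans hab hbc)⟩
    obtain ⟨a', b', c', hab', hbc', heq, hpos⟩ := hclq _ hsub hcard3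
    obtain ⟨h1, h2, h3⟩ := triple_eq hab hbc hab' hbc' heq
    rw [h1, h2, h3]
    exact hpos
  have keyneg : ∀ (hSk : S.card = k) (hclq : ∀ T ⊆ S, T.card = 3 → ¬ cT T)
      (a b c : Pt), a ∈ S → b ∈ S → c ∈ S → a < b → b < c → cross a b c < 0 := by
    intro hSk hclq a b c haS hbS hcS hab hbc
    have hsub : ({a, b, c} : Finset Pt) ⊆ S := by
      intro x hx
      rcases Finset.mem_insert.1 hx with rfl | hx
      · exact haS
      rcases Finset.mem_insert.1 hx with rfl | hx
      · exact hbS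
      · rw [Finset.mem_singleton.1 hx]; exact hcS
    have hcard3 : ({a, b, c} : Finset Pt).card = 3 := by
      rw [Finset.card_insert_of_notMem, Finset.card_insert_of_notMem, Finset.card_singleton]
      · simp only [Finset.mem_singleton]; exact ne_of_lt hbc
      · simp only [Finset.mem_insert, Finset.mem_singleton]
        push_neg
        exact ⟨ne_of_lt hab, ne_of_lt (lt_trans hab hbc)⟩
    have hne : cross a b c ≠ 0 := by
      intro h0
      exact hgen _ (hsub.trans hSP) hcard3 (by
        have := collinear_of_cross_eq_zero h0
        simpa using this)
    rcases lt_trichotomy (cross a b c) 0 with h | h | h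
    · exact h
    · exact absurd h hne
    · exact absurd ⟨a, b, c, hab, hbc, rfl, h⟩ (hclq _ hsub hcard3)
  rcases hS with ⟨hSk, hclq⟩ | ⟨hSk, hclq⟩
  · -- cup
    set f : Fin k → Pt := fun i => (S.orderIsoOfFin hSk i : Pt) with hf
    have hfS : ∀ i, f i ∈ S := fun i => (S.orderIsoOfFin hSk i).2
    have hmono : ∀ i j : Fin k, i < j → f i < f j := by
      intro i j hij
      exact Subtype.coe_lt_coe.2 ((S.orderIsoOfFin hSk).lt_iff_lt.2 hij)
    have himg : Finset.image f Finset.univ = S := by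
      ext x
      simp only [Finset.mem_image, Finset.mem_univ, true_and]
      constructor
      · rintro ⟨i, rfl⟩; exact hfS i
      · intro hx
        refine ⟨(S.orderIsoOfFin hSk).symm ⟨x, hx⟩, ?_⟩
        show ((S.orderIsoOfFin hSk) ((S.orderIsoOfFin hSk).symm ⟨x, hx⟩) : Pt) = x
        rw [OrderIso.apply_symm_apply]
    refine ⟨S, hSP, hSk, ?_⟩
    rw [← himg]
    exact cup_convexPos hk f (fun i j m hij hjm =>
      key hSk hclq _ _ _ (hfS i) (hfS j) (hfS m) (hmono _ _ hij) (hmono _ _ hjm))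
  · -- cap: reverse the order
    set f0 : Fin k → Pt := fun i => (S.orderIsoOfFin hSk i : Pt) with hf0
    have hf0S : ∀ i, f0 i ∈ S := fun i => (S.orderIsoOfFin hSk i).2
    have hmono : ∀ i j : Fin k, i < j → f0 i < f0 j := by
      intro i j hij
      exact Subtype.coe_lt_coe.2 ((S.orderIsoOfFin hSk).lt_iff_lt.2 hij)
    set f : Fin k → Pt := fun i => f0 ⟨k - 1 - (i : ℕ), by omega⟩ with hf
    have hfS : ∀ i, f i ∈ S := fun i => hf0S _
    have himg : Finset.image f Finset.univ = S := by
      ext x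
      simp only [Finset.mem_image, Finset.mem_univ, true_and]
      constructor
      · rintro ⟨i, rfl⟩; exact hfS i
      · intro hx
        set j : Fin k := (S.orderIsoOfFin hSk).symm ⟨x, hx⟩ with hj
        have hjk : (j : ℕ) < k := j.isLt
        refine ⟨⟨k - 1 - (j : ℕ), by omega⟩, ?_⟩
        have : (⟨k - 1 - (k - 1 - (j : ℕ)), by omega⟩ : Fin k) = j := by
          apply Fin.ext
          simp
          omega
        show f0 ⟨k - 1 - (k - 1 - (j : ℕ)), by omega⟩ = x
        rw [this]
        show ((S.orderIsoOfFin hSk) ((S.orderIsoOfFin hSk).symm ⟨x, hx⟩) : Pt) = x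
        rw [OrderIso.apply_symm_apply]
    refine ⟨S, hSP, hSk, ?_⟩
    rw [← himg]
    refine cup_convexPos hk f (fun i j m hij hjm => ?_)
    have h1 : (⟨k - 1 - (m : ℕ), by omega⟩ : Fin k) < ⟨k - 1 - (j : ℕ), by omega⟩ := by
      rw [Fin.lt_def] at *
      simp only [Fin.val_mk]
      omega
    have h2 : (⟨k - 1 - (j : ℕ), by omega⟩ : Fin k) < ⟨k - 1 - (i : ℕ), by omega⟩ := by
      rw [Fin.lt_def] at *
      simp only [Fin.val_mk]
      omega
    have hneg := keyneg hSk hclq _ _ _ (hf0S ⟨k - 1 - (m : ℕ), by omega⟩)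
      (hf0S ⟨k - 1 - (j : ℕ), by omega⟩) (hf0S ⟨k - 1 - (i : ℕ), by omega⟩)
      (hmono _ _ h1) (hmono _ _ h2)
    have : cross (f i) (f j) (f m) =
        - cross (f0 ⟨k - 1 - (m : ℕ), by omega⟩) (f0 ⟨k - 1 - (j : ℕ), by omega⟩)
          (f0 ⟨k - 1 - (i : ℕ), by omega⟩) := by
      rw [hf]
      simp only []
      rw [← cross_rev]
    rw [this]
    linarith


-- ===================== extraction =====================

open Classical in
lemma extract_genPos (l : ℕ) (hl : 3 ≤ l) (P : Finset Pt) (hno : ¬ HasCollinear P l) :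
    ∀ m : ℕ, (l - 3) * (m - 1).choose 2 + m ≤ P.card → ∃ Q ⊆ P, Q.card = m ∧ GenPos Q := by
  intro m
  induction m with
  | zero =>
    intro _
    exact ⟨∅, Finset.empty_subset _, rfl, fun S hS h3 _ => by
      simp [Finset.subset_empty.1 hS] at h3⟩
  | succ m ih =>
    intro hcard
    simp only [Nat.add_sub_cancel] at hcard
    have hmono : (m - 1).choose 2 ≤ m.choose 2 := Nat.choose_le_choose 2 (by omega)
    obtain ⟨Q, hQP, hQcard, hQgen⟩ := ih (by
      have h2 := Nat.mul_le_mul_left (l - 3) hmono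
      omega)
    -- the forbidden set
    set F : Finset Pt := Q ∪ (Q.powersetCard 2).biUnion
      (fun e => (P.filter (fun x => Collinear ℝ (insert x (e : Set Pt)))) \ e) with hF
    have hLcard : ∀ e ∈ Q.powersetCard 2,
        ((P.filter (fun x => Collinear ℝ (insert x (e : Set Pt)))) \ e).card ≤ l - 3 := by
      intro e he
      obtain ⟨heQ, he2⟩ := Finset.mem_powersetCard.1 he
      obtain ⟨a, b, hab, rfl⟩ := Finset.card_eq_two.1 he2
      set L : Finset Pt := P.filter (fun x => Collinear ℝ (insert x (({a, b} : Finset Pt) : Set Pt))) with hL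
      have hcoe : (({a, b} : Finset Pt) : Set Pt) = {a, b} := by simp
      have hsubL : ({a, b} : Finset Pt) ⊆ L := by
        intro x hx
        rcases Finset.mem_insert.1 hx with rfl | hx
        · refine Finset.mem_filter.2 ⟨hQP (heQ (by simp)), ?_⟩
          rw [hcoe]
          rw [Set.insert_eq_self.2 (by simp)]
          exact collinear_pair ℝ _ _
        · rw [Finset.mem_singleton.1 hx]
          refine Finset.mem_filter.2 ⟨hQP (heQ (by simp)), ?_⟩
          rw [hcoe]
          rw [Set.insert_eq_self.2 (by simp)]
          exact collinear_pair ℝ _ _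
      have hline : Collinear ℝ ((affineSpan ℝ ({a, b} : Set Pt) : Set Pt)) := by
        rw [collinear_iff_rank_le_one, ← AffineSubspace.direction_eq_vectorSpan, direction_affineSpan]
        exact (collinear_iff_rank_le_one ℝ _).1 (collinear_pair ℝ a b)
      have hLline : (L : Set Pt) ⊆ (affineSpan ℝ ({a, b} : Set Pt) : Set Pt) := by
        intro x hx
        have hx' := (Finset.mem_filter.1 hx).2
        rw [hcoe] at hx'
        exact hx'.mem_affineSpan_of_mem_of_ne (Set.mem_insert_of_mem _ (Set.mem_insert _ _))
          (Set.mem_insert_of_mem _ (Set.mem_insert_of_mem _ rfl)) (Set.mem_insert _ _) hab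
      have hLcol : Collinear ℝ (L : Set Pt) := hline.subset hLline
      have hLlt : L.card ≤ l - 1 := by
        by_contra hc
        push_neg at hc
        obtain ⟨R, hRL, hRcard⟩ := Finset.exists_subset_card_eq (show l ≤ L.card by omega)
        exact hno ⟨R, hRL.trans (Finset.filter_subset _ _), hRcard,
          hLcol.subset (by exact_mod_cast Finset.coe_subset.2 hRL)⟩
      have : (L \ {a, b}).card = L.card - 2 := by
        rw [Finset.card_sdiff_of_subset hsubL, he2]
      omega
    have hFcard : F.card ≤ m + m.choose 2 * (l - 3) := by
      calc F.card ≤ Q.card + ((Q.powersetCard 2).biUnion _).card := Finset.card_union_le _ _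
        _ ≤ Q.card + ∑ e ∈ Q.powersetCard 2,
            ((P.filter (fun x => Collinear ℝ (insert x (e : Set Pt)))) \ e).card :=
          Nat.add_le_add_left (Finset.card_biUnion_le) _
        _ ≤ m + m.choose 2 * (l - 3) := by
          apply Nat.add_le_add (le_of_eq hQcard)
          calc (∑ e ∈ Q.powersetCard 2,
              ((P.filter (fun x => Collinear ℝ (insert x (e : Set Pt)))) \ e).card)
              ≤ (Q.powersetCard 2).card * (l - 3) :=
                Finset.sum_le_card_nsmul _ _ _ hLcard
            _ = m.choose 2 * (l - 3) := by rw [Finset.card_powersetCard, hQcard]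
    have hFlt : F.card < P.card := by
      have h1 : m.choose 2 * (l - 3) = (l - 3) * m.choose 2 := Nat.mul_comm _ _
      omega
    have hnsub : ¬ P ⊆ F := fun hPF => absurd (Finset.card_le_card hPF) (by omega)
    obtain ⟨p, hpP, hpF⟩ := Finset.not_subset.1 hnsub
    have hpQ : p ∉ Q := fun h => hpF (Finset.mem_union_left _ h)
    refine ⟨insert p Q, Finset.insert_subset hpP hQP, ?_, ?_⟩
    · rw [Finset.card_insert_of_notMem hpQ, hQcard]
    · intro S hS h3 hcol
      by_cases hpS : p ∈ S
      · set e : Finset Pt := S.erase p with he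
        have heQ : e ⊆ Q := by
          intro x hx
          rcases Finset.mem_insert.1 (hS (Finset.mem_of_mem_erase hx)) with rfl | h
          · exact absurd rfl (Finset.ne_of_mem_erase hx)
          · exact h
        have he2 : e.card = 2 := by rw [he, Finset.card_erase_of_mem hpS, h3]
        have hepc : e ∈ Q.powersetCard 2 := Finset.mem_powersetCard.2 ⟨heQ, he2⟩
        have hScoe : (S : Set Pt) = insert p (e : Set Pt) := by
          rw [he, Finset.coe_erase, Set.insert_diff_singleton,
            Set.insert_eq_self.2 (Finset.mem_coe.2 hpS)]
        have hpL : p ∈ (P.filter (fun x => Collinear ℝ (insert x (e : Set Pt)))) \ e := by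
          refine Finset.mem_sdiff.2 ⟨Finset.mem_filter.2 ⟨hpP, ?_⟩, Finset.notMem_erase _ _⟩
          rw [← hScoe]
          exact hcol
        exact hpF (Finset.mem_union_right _ (Finset.mem_biUnion.2 ⟨e, hepc, hpL⟩))
      · have hSQ : S ⊆ Q := by
          intro x hx
          rcases Finset.mem_insert.1 (hS hx) with rfl | h
          · exact absurd hx hpS
          · exact h
        exact hQgen S hSQ h3 hcol


-- ===================== main theorem =====================

theorem stmt12 (k l : ℕ) (hk : 3 ≤ k) (hl : 3 ≤ l)
    (P : Finset Pt) (hP : (l - 3) * (ES k - 1).choose 2 + ES k ≤ P.card) :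
    HasCollinear P l ∨ HasStrictConvex P k := by
  by_cases hcol : HasCollinear P l
  · exact Or.inl hcol
  · right
    have hES : ES k ∈ {n : ℕ | ∀ P : Finset Pt, GenPos P → n ≤ P.card → HasConvex P k} := by
      unfold ES
      exact Nat.sInf_mem ⟨r3 k k, fun P hg hc => happyEnd k hk P hg hc⟩
    obtain ⟨Q, hQP, hQcard, hQgen⟩ := extract_genPos l hl P hcol (ES k) hP
    have hconv : HasConvex Q k := hES Q hQgen (le_of_eq hQcard.symm)
    obtain ⟨S, hSQ, hScard, hSconv⟩ := hconv
    have hSgen : GenPos S := fun T hT h3 => hQgen T (fun x hx => hSQ (hT hx)) h3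
    exact ⟨S, fun x hx => hQP (hSQ hx), hScard,
      convexPos_strictConvexPos (by rw [hScard]; exact hk) hSgen hSconv⟩
end

section
/- For all integers k ≥ 3 and ℓ ≥ 3, every finite set of at least (ℓ−3)·C(k−1, 2) + k points in the plane contains ℓ collinear points or k points in general position. -/
/-- A subset of a general position set is in general position. -/
lemma GenPos.mono {S T : Finset Pt} (hST : S ⊆ T) (hT : GenPos T) : GenPos S :=
  fun X hX hX3 => hT X (hX.trans hST) hX3

/-- A line (affine span of a pair) is a collinear set. -/
lemma collinear_line (a b : Pt) : Collinear ℝ (line[ℝ, a, b] : Set Pt) := by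
  have h : Collinear ℝ ({a, b} : Set Pt) := collinear_pair ℝ a b
  rw [Collinear] at h ⊢
  rwa [show vectorSpan ℝ (line[ℝ, a, b] : Set Pt)
      = (line[ℝ, a, b]).direction from rfl, direction_affineSpan]

theorem stmt13 (k l : ℕ) (hk : 3 ≤ k) (hl : 3 ≤ l)
    (P : Finset Pt) (hP : (l - 3) * (k - 1).choose 2 + k ≤ P.card) :
    HasCollinear P l ∨ ∃ S ⊆ P, S.card = k ∧ GenPos S := by
  classical
  -- pick a maximal general-position subset S of P
  obtain ⟨S, hSmem, hSmax⟩ :=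
    Finset.exists_max_image (P.powerset.filter (fun S => GenPos S)) Finset.card
      ⟨∅, by rw [Finset.mem_filter]; exact ⟨Finset.empty_mem_powerset _, fun S hS h3 => by simp [Finset.subset_empty.1 hS] at h3⟩⟩
  rw [Finset.mem_filter, Finset.mem_powerset] at hSmem
  obtain ⟨hSP, hSgen⟩ := hSmem
  by_cases hkS : k ≤ S.card
  · obtain ⟨T, hTS, hTcard⟩ := Finset.exists_subset_card_eq hkS
    exact Or.inr ⟨T, hTS.trans hSP, hTcard, GenPos.mono hTS hSgen⟩
  -- otherwise S.card ≤ k - 1 and every point of P \ S is collinear with a pair of S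
  push_neg at hkS
  have hSle : S.card ≤ k - 1 := Nat.le_sub_one_of_lt hkS
  have hmax : ∀ T ∈ P.powerset.filter (fun S => GenPos S), T.card ≤ S.card := hSmax
  have hex : ∀ p ∈ P \ S, ∃ e ∈ S.powersetCard 2,
      Collinear ℝ (insert p (e : Set Pt)) := by
    intro p hp
    rw [Finset.mem_sdiff] at hp
    obtain ⟨hpP, hpS⟩ := hp
    have hnot : ¬ GenPos (insert p S) := by
      intro hgen
      have := hmax (insert p S) (by
        rw [Finset.mem_filter, Finset.mem_powerset]
        exact ⟨Finset.insert_subset hpP hSP, hgen⟩)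
      rw [Finset.card_insert_of_notMem hpS] at this
      omega
    rw [GenPos] at hnot
    push_neg at hnot
    obtain ⟨T, hTsub, hT3, hTcol⟩ := hnot
    have hpT : p ∈ T := by
      by_contra hpT
      exact hSgen T (fun x hx => by
        rcases Finset.mem_insert.1 (hTsub hx) with h | h
        · exact absurd (h ▸ hx) hpT
        · exact h) hT3 hTcol
    refine ⟨T.erase p, ?_, ?_⟩
    · rw [Finset.mem_powersetCard]
      constructor
      · intro x hx
        have hx' := hTsub (Finset.mem_of_mem_erase hx)
        rcases Finset.mem_insert.1 hx' with h | h
        · exact absurd h (Finset.ne_of_mem_erase hx)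
        · exact h
      · rw [Finset.card_erase_of_mem hpT, hT3]
    · have : insert p (T.erase p) = T := Finset.insert_erase hpT
      rw [← this] at hTcol
      simpa using hTcol
  -- build the selection function
  set f : Pt → Finset Pt := fun p =>
    if h : p ∈ P \ S then (hex p h).choose else ∅ with hf
  have hfmem : ∀ p ∈ P \ S, f p ∈ S.powersetCard 2 := by
    intro p hp
    rw [hf]; simp only [dif_pos hp]
    exact (hex p hp).choose_spec.1
  have hfcol : ∀ p ∈ P \ S, Collinear ℝ (insert p ((f p : Finset Pt) : Set Pt)) := by
    intro p hp
    rw [hf]; simp only [dif_pos hp]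
    exact (hex p hp).choose_spec.2
  -- pigeonhole
  have hcards : (S.powersetCard 2).card * (l - 3) < (P \ S).card := by
    rw [Finset.card_powersetCard, Finset.card_sdiff_of_subset hSP]
    have h1 : S.card.choose 2 ≤ (k - 1).choose 2 := Nat.choose_le_choose 2 hSle
    have h2 : S.card ≤ k - 1 := hSle
    calc S.card.choose 2 * (l - 3) ≤ (k - 1).choose 2 * (l - 3) :=
          Nat.mul_le_mul_right _ h1
      _ = (l - 3) * (k - 1).choose 2 := Nat.mul_comm _ _
      _ < P.card - S.card := by
          have h3 : (l - 3) * (k - 1).choose 2 + k ≤ P.card := hP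
          omega
  obtain ⟨e, hemem, hefib⟩ :=
    Finset.exists_lt_card_fiber_of_mul_lt_card_of_maps_to hfmem hcards
  rw [Finset.mem_powersetCard] at hemem
  obtain ⟨heS, he2⟩ := hemem
  obtain ⟨a, b, hab, habe⟩ := Finset.card_eq_two.1 he2
  -- extract l - 2 points from the fiber
  have : l - 2 ≤ ((P \ S).filter (fun p => f p = e)).card := by omega
  obtain ⟨U, hUfib, hUcard⟩ := Finset.exists_subset_card_eq this
  -- the set e ∪ U is l collinear points of P
  left
  refine ⟨e ∪ U, ?_, ?_, ?_⟩
  · intro x hx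
    rcases Finset.mem_union.1 hx with h | h
    · exact hSP (heS h)
    · exact (Finset.mem_sdiff.1 (Finset.mem_filter.1 (hUfib h)).1).1
  · rw [Finset.card_union_of_disjoint, he2, hUcard]
    · omega
    · refine Finset.disjoint_left.2 fun x hxe hxU => ?_
      exact (Finset.mem_sdiff.1 (Finset.mem_filter.1 (hUfib hxU)).1).2 (heS hxe)
  · -- collinearity: everything lies on line[ℝ, a, b]
    refine (collinear_line a b).subset ?_
    intro x hx
    rw [Finset.coe_union, Set.mem_union] at hx
    rcases hx with hx | hx
    · rw [habe] at hx
      rcases Finset.mem_insert.1 hx with h | h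
      · exact h ▸ left_mem_affineSpan_pair ℝ a b
      · exact (Finset.mem_singleton.1 h) ▸ right_mem_affineSpan_pair ℝ a b
    · have hxU : x ∈ U := hx
      have hxfib := Finset.mem_filter.1 (hUfib hxU)
      have hcol := hfcol x hxfib.1
      rw [hxfib.2, habe] at hcol
      have : (({a, b} : Finset Pt) : Set Pt) = {a, b} := by simp
      rw [this] at hcol
      exact hcol.mem_affineSpan_of_mem_of_ne
        (Set.mem_insert_of_mem _ (Set.mem_insert _ _))
        (Set.mem_insert_of_mem _ (Set.mem_insert_of_mem _ rfl))
        (Set.mem_insert _ _) hab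
end
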